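/- arXiv:0803.3565 — 8 statements merged into one kernel-verified Lean document; each statement's English description precedes it below -/
import Mathlib

section
/- Let ω ∈ (0, π/2) and let ζ ∈ ℂ with ζ ≠ 0, Re ζ < 0 and |arg ζ| ≤ π/2 + ω. Then for every G = (G⁽ⁿ⁾)_{n≥0} with ‖G‖_C < ∞ one has Σ_{n=0}^∞ (Cⁿ/n!) ∫_{(ℝ^d)ⁿ} |G⁽ⁿ⁾(x)| / |m n + κ⁻ Eₙ^{a⁻}(x) + ζ| dx ≤ (1/(|ζ| cos ω)) ‖G‖_C. (Sector resolvent bound ‖(L₀ − ζ)⁻¹‖ ≤ M_ω/|ζ| with M_ω = 1/cos ω, part of Proposition 4.2 showing L₀ ∈ 𝓗(ω,0).) -/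
open MeasureTheory ENNReal Real

/-- The pair interaction energy `Eₙ^a(x) = Σ_{i≠j} a(xᵢ - xⱼ)` (equal to `0` for `n ≤ 1`). -/
def pairEnergy (d : ℕ) (a : (Fin d → ℝ) → ℝ) (n : ℕ) (x : Fin n → (Fin d → ℝ)) : ℝ :=
  ∑ i : Fin n, ∑ j : Fin n, if i ≠ j then a (x i - x j) else 0

/-- The norm of the Banach space `𝓛_C = L¹(Γ₀, C^{|η|}dλ(η))`. -/
noncomputable def normLC (d : ℕ) (C : ℝ) (G : (n : ℕ) → (Fin n → (Fin d → ℝ)) → ℝ) : ℝ≥0∞ :=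
  ∑' n : ℕ, ENNReal.ofReal (C ^ n / n.factorial) *
    ∫⁻ x : Fin n → (Fin d → ℝ), ENNReal.ofReal |G n x|

/-- Sector resolvent bound `‖(L₀ - ζ)⁻¹‖ ≤ (1/cos ω)/|ζ|` for `ζ` in the sector
`|arg ζ| ≤ π/2 + ω`, `Re ζ < 0` (part of Proposition 4.2, showing `L₀ ∈ 𝓗(ω,0)`). -/
theorem stmt1 (d : ℕ) (hd : 1 ≤ d)
    (aminus aplus : (Fin d → ℝ) → ℝ)
    (ham_nonneg : ∀ x, 0 ≤ aminus x) (ham_even : ∀ x, aminus (-x) = aminus x)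
    (ham_meas : Measurable aminus) (ham_int : Integrable aminus)
    (ham_norm : ∫ x, aminus x = 1)
    (hap_nonneg : ∀ x, 0 ≤ aplus x) (hap_even : ∀ x, aplus (-x) = aplus x)
    (hap_meas : Measurable aplus) (hap_int : Integrable aplus)
    (hap_norm : ∫ x, aplus x = 1)
    (m κm κp C : ℝ) (hm : 0 < m) (hκm : 0 < κm) (hκp : 0 < κp) (hC : 0 < C)
    (ω : ℝ) (hω0 : 0 < ω) (hωpi : ω < Real.pi / 2)
    (ζ : ℂ) (hζ : ζ ≠ 0) (hζre : ζ.re < 0) (hζarg : |ζ.arg| ≤ Real.pi / 2 + ω)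
    (G : (n : ℕ) → (Fin n → (Fin d → ℝ)) → ℝ) (hGmeas : ∀ n, Measurable (G n))
    (hG : normLC d C G < ⊤) :
    ∑' n : ℕ, ENNReal.ofReal (C ^ n / n.factorial) *
        ∫⁻ x : Fin n → (Fin d → ℝ),
          ENNReal.ofReal
            (|G n x| / ‖((m * n + κm * pairEnergy d aminus n x : ℝ) : ℂ) + ζ‖)
      ≤ (ENNReal.ofReal (‖ζ‖ * Real.cos ω))⁻¹ * normLC d C G := by
  set K := ‖ζ‖ * Real.cos ω with hKdef
  have hπ := Real.pi_pos
  have hcos : 0 < Real.cos ω := Real.cos_pos_of_mem_Ioo ⟨by linarith, hωpi⟩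
  have habsζ : 0 < ‖ζ‖ := norm_pos_iff.mpr hζ
  have hK : 0 < K := mul_pos habsζ hcos
  -- |arg ζ| > π/2 since Re ζ < 0
  have hargmem := Complex.arg_mem_Ioc ζ
  have hargabs : |ζ.arg| ≤ Real.pi := abs_le.2 ⟨by linarith [hargmem.1], hargmem.2⟩
  have harg : Real.pi / 2 < |ζ.arg| := by
    by_contra h
    push_neg at h
    have h1 : 0 ≤ Real.cos |ζ.arg| :=
      Real.cos_nonneg_of_mem_Icc ⟨by linarith [abs_nonneg ζ.arg], h⟩
    have h2 : Real.cos |ζ.arg| = Real.cos ζ.arg := by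
      rcases abs_cases ζ.arg with ⟨he, _⟩ | ⟨he, _⟩
      · rw [he]
      · rw [he, Real.cos_neg]
    rw [h2, Complex.cos_arg hζ] at h1
    have : ζ.re / ‖ζ‖ < 0 := div_neg_of_neg_of_pos hζre habsζ
    linarith
  -- sin |arg ζ| ≥ cos ω
  have hsin : Real.cos ω ≤ Real.sin |ζ.arg| := by
    have h1 : Real.sin |ζ.arg| = Real.cos (|ζ.arg| - Real.pi / 2) := by
      rw [Real.cos_sub_pi_div_two]
    rw [h1]
    exact Real.cos_le_cos_of_nonneg_of_le_pi (by linarith) (by linarith) (by linarith)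
  -- |ζ.im| = |ζ| * sin |arg ζ|
  have him : ‖ζ‖ * Real.sin |ζ.arg| = |ζ.im| := by
    have h := Complex.sin_arg ζ
    have h2 : Real.sin |ζ.arg| = |Real.sin ζ.arg| := by
      rcases abs_cases ζ.arg with ⟨he, hpos⟩ | ⟨he, hneg⟩
      · rw [he]
        have : 0 ≤ Real.sin ζ.arg :=
          Real.sin_nonneg_of_nonneg_of_le_pi hpos hargmem.2
        rw [abs_of_nonneg this]
      · rw [he, Real.sin_neg]
        have : Real.sin ζ.arg ≤ 0 := by
          have := Real.sin_nonpos_of_nonpos_of_neg_pi_le (le_of_lt hneg) (by linarith [hargmem.1])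
          exact this
        rw [abs_of_nonpos this]
    rw [h2, h, abs_div, abs_of_pos habsζ]
    field_simp
  have key : ∀ t : ℝ, 0 ≤ t → K ≤ ‖(t : ℂ) + ζ‖ := by
    intro t ht
    have h1 : |((t : ℂ) + ζ).im| ≤ ‖(t : ℂ) + ζ‖ :=
      Complex.abs_im_le_norm _
    have h2 : ((t : ℂ) + ζ).im = ζ.im := by simp
    rw [h2] at h1
    refine le_trans ?_ h1
    rw [← him, hKdef]
    exact mul_le_mul_of_nonneg_left hsin habsζ.le
  have hKne : ENNReal.ofReal K ≠ 0 := by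
    simp [ENNReal.ofReal_eq_zero, not_le, hK]
  calc ∑' n : ℕ, ENNReal.ofReal (C ^ n / n.factorial) *
        ∫⁻ x : Fin n → (Fin d → ℝ),
          ENNReal.ofReal
            (|G n x| / ‖((m * n + κm * pairEnergy d aminus n x : ℝ) : ℂ) + ζ‖)
      ≤ ∑' n : ℕ, ENNReal.ofReal (C ^ n / n.factorial) *
          ((ENNReal.ofReal K)⁻¹ * ∫⁻ x : Fin n → (Fin d → ℝ), ENNReal.ofReal |G n x|) := by
        refine ENNReal.tsum_le_tsum fun n => ?_
        refine mul_le_mul_right ?_ _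
        rw [← lintegral_const_mul' _ _ (by simp [hK])]
        refine lintegral_mono fun x => ?_
        have hE : 0 ≤ pairEnergy d aminus n x := by
          refine Finset.sum_nonneg fun i _ => Finset.sum_nonneg fun j _ => ?_
          split <;> simp [ham_nonneg]
        have ht : (0 : ℝ) ≤ m * n + κm * pairEnergy d aminus n x := by
          have : (0 : ℝ) ≤ m * n := by positivity
          nlinarith
        have hk := key _ ht
        have hdiv : |G n x| / ‖((m * n + κm * pairEnergy d aminus n x : ℝ) : ℂ) + ζ‖
            ≤ |G n x| / K := by
          gcongr
        calc ENNReal.ofReal (|G n x| / ‖((m * n + κm * pairEnergy d aminus n x : ℝ) : ℂ) + ζ‖)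
            ≤ ENNReal.ofReal (|G n x| / K) := ENNReal.ofReal_le_ofReal hdiv
          _ = (ENNReal.ofReal K)⁻¹ * ENNReal.ofReal |G n x| := by
              rw [ENNReal.ofReal_div_of_pos hK, div_eq_mul_inv, mul_comm]
    _ = (ENNReal.ofReal K)⁻¹ * normLC d C G := by
        rw [normLC, ← ENNReal.tsum_mul_left]
        congr 1
        funext n
        ring
end

section
/- For every sequence G = (G⁽ⁿ⁾)_{n≥0} with ‖L₀G‖_C < ∞ one has ‖L₁G‖_C ≤ (κ⁻ C / m) ‖L₀G‖_C. In particular, for any δ > 0, if C < δ m / κ⁻ then ‖L₁G‖_C ≤ a ‖L₀G‖_C with a = κ⁻C/m < δ. (Lemma 4.3: relative bound of the off-diagonal competition part L₁ with respect to the diagonal part L₀.) -/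
open MeasureTheory ENNReal

/-- The diagonal operator `(L₀G)⁽ⁿ⁾(x) = -(mn + κ⁻Eₙ^{a⁻}(x))G⁽ⁿ⁾(x)`. -/
def L0 (d : ℕ) (m κm : ℝ) (aminus : (Fin d → ℝ) → ℝ)
    (G : (n : ℕ) → (Fin n → (Fin d → ℝ)) → ℝ) :
    (n : ℕ) → (Fin n → (Fin d → ℝ)) → ℝ :=
  fun n x => -(m * n + κm * pairEnergy d aminus n x) * G n x

/-- The off-diagonal competition part
`(L₁G)⁽ⁿ⁾(x₁,…,xₙ) = κ⁻ Σ_j Σ_{i≠j} a⁻(xᵢ-xⱼ) G⁽ⁿ⁻¹⁾(x₁,…,x̂ⱼ,…,xₙ)` for `n ≥ 2`,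
and `0` for `n ≤ 1`. -/
def L1 (d : ℕ) (κm : ℝ) (aminus : (Fin d → ℝ) → ℝ)
    (G : (n : ℕ) → (Fin n → (Fin d → ℝ)) → ℝ) :
    (n : ℕ) → (Fin n → (Fin d → ℝ)) → ℝ
  | 0 => fun _ => 0
  | 1 => fun _ => 0
  | (k + 2) => fun x =>
      κm * ∑ j : Fin (k + 2), ∑ i : Fin (k + 2),
        if i ≠ j then aminus (x i - x j) * G (k + 1) (x ∘ j.succAbove) else 0

variable {d : ℕ}

lemma aux_lint_a (a : (Fin d → ℝ) → ℝ) (ha0 : ∀ x, 0 ≤ a x)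
    (hae : ∀ x, a (-x) = a x) (hai : Integrable a) (han : ∫ x, a x = 1)
    (c : Fin d → ℝ) :
    ∫⁻ t : Fin d → ℝ, ENNReal.ofReal (a (c - t)) = 1 := by
  have h1 : ∀ t : Fin d → ℝ, a (c - t) = a (t + (-c)) := by
    intro t
    have h2 : c - t = -(t + (-c)) := by abel
    rw [h2, hae]
  simp_rw [h1]
  rw [lintegral_add_right_eq_self (fun t => ENNReal.ofReal (a t)) (-c),
    ← ofReal_integral_eq_lintegral_ofReal hai (ae_of_all _ ha0), han, ENNReal.ofReal_one]

lemma aux_int (k : ℕ) (a : (Fin d → ℝ) → ℝ) (ha0 : ∀ x, 0 ≤ a x)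
    (hae : ∀ x, a (-x) = a x) (ham : Measurable a) (hai : Integrable a)
    (han : ∫ x, a x = 1)
    (g : (Fin (k + 1) → Fin d → ℝ) → ℝ) (hg : Measurable g)
    (j i : Fin (k + 2)) (hij : i ≠ j) :
    ∫⁻ x : Fin (k + 2) → (Fin d → ℝ),
      ENNReal.ofReal (a (x i - x j)) * ENNReal.ofReal |g (x ∘ j.succAbove)|
      = ∫⁻ y : Fin (k + 1) → (Fin d → ℝ), ENNReal.ofReal |g y| := by
  obtain ⟨l, hl⟩ := Fin.exists_succAbove_eq hij
  set F : (Fin d → ℝ) × (Fin (k + 1) → Fin d → ℝ) → ℝ≥0∞ :=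
    fun p => ENNReal.ofReal (a (p.2 l - p.1)) * ENNReal.ofReal |g p.2| with hF
  have hFmeas : Measurable F := by
    simp only [hF]
    fun_prop
  have key : ∀ x : Fin (k + 2) → (Fin d → ℝ),
      F ((MeasurableEquiv.piFinSuccAbove (fun _ => Fin d → ℝ) j) x)
        = ENNReal.ofReal (a (x i - x j)) * ENNReal.ofReal |g (x ∘ j.succAbove)| := by
    intro x
    have h2 : (MeasurableEquiv.piFinSuccAbove (fun _ : Fin (k+2) => Fin d → ℝ) j) x
        = (x j, x ∘ j.succAbove) := rfl
    rw [h2]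
    simp only [hF]
    rw [show (x ∘ j.succAbove) l = x i by simp [Function.comp, hl]]
  calc ∫⁻ x : Fin (k + 2) → (Fin d → ℝ),
        ENNReal.ofReal (a (x i - x j)) * ENNReal.ofReal |g (x ∘ j.succAbove)|
      = ∫⁻ x, F ((MeasurableEquiv.piFinSuccAbove (fun _ => Fin d → ℝ) j) x) := by
        simp_rw [key]
    _ = ∫⁻ p, F p := (volume_preserving_piFinSuccAbove (fun _ : Fin (k+2) => Fin d → ℝ) j).lintegral_comp hFmeas
    _ = ∫⁻ p, F p ∂((volume : Measure (Fin d → ℝ)).prod (volume : Measure (Fin (k+1) → Fin d → ℝ))) := by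
        rw [← Measure.volume_eq_prod]
    _ = ∫⁻ y, ∫⁻ t, F (t, y) := lintegral_prod_symm F hFmeas.aemeasurable
    _ = ∫⁻ y : Fin (k + 1) → (Fin d → ℝ), ENNReal.ofReal |g y| := by
        refine lintegral_congr fun y => ?_
        simp only [hF]
        rw [lintegral_mul_const _ (show Measurable fun t : Fin d → ℝ => ENNReal.ofReal (a (y l - t)) by fun_prop),
          aux_lint_a a ha0 hae hai han (y l), one_mul]

lemma pairEnergy_nonneg (a : (Fin d → ℝ) → ℝ) (ha0 : ∀ x, 0 ≤ a x) (n : ℕ)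
    (x : Fin n → (Fin d → ℝ)) : 0 ≤ pairEnergy d a n x := by
  refine Finset.sum_nonneg fun i _ => Finset.sum_nonneg fun j _ => ?_
  by_cases h : i ≠ j <;> simp [h, ha0]

lemma aux_L1 (k : ℕ) (κ : ℝ) (hκ : 0 < κ) (a : (Fin d → ℝ) → ℝ) (ha0 : ∀ x, 0 ≤ a x)
    (hae : ∀ x, a (-x) = a x) (ham : Measurable a) (hai : Integrable a)
    (han : ∫ x, a x = 1)
    (G : (n : ℕ) → (Fin n → (Fin d → ℝ)) → ℝ) (hGmeas : ∀ n, Measurable (G n)) :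
    ∫⁻ x : Fin (k + 2) → (Fin d → ℝ), ENNReal.ofReal |L1 d κ a G (k + 2) x|
      ≤ (((k + 2) * (k + 1) : ℕ) : ℝ≥0∞) *
        (ENNReal.ofReal κ * ∫⁻ y : Fin (k + 1) → (Fin d → ℝ), ENNReal.ofReal |G (k + 1) y|) := by
  set A := ∫⁻ y : Fin (k + 1) → (Fin d → ℝ), ENNReal.ofReal |G (k + 1) y| with hA
  set T : Fin (k + 2) → Fin (k + 2) → (Fin (k + 2) → Fin d → ℝ) → ℝ≥0∞ :=
    fun j i x => if i ≠ j then
      ENNReal.ofReal (a (x i - x j)) * ENNReal.ofReal |G (k + 1) (x ∘ j.succAbove)| else 0 with hT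
  have hTmeas : ∀ j i, Measurable (T j i) := by
    intro j i
    by_cases h : i ≠ j
    · simp only [hT, if_pos h]
      have hcomp : Measurable fun x : Fin (k + 2) → Fin d → ℝ => x ∘ j.succAbove :=
        measurable_pi_iff.2 fun l => measurable_pi_apply _
      exact Measurable.mul (by fun_prop) (((hGmeas (k + 1)).comp hcomp).abs.ennreal_ofReal)
    · simp only [hT, if_neg h]; exact measurable_const
  have hpt : ∀ x, ENNReal.ofReal |L1 d κ a G (k + 2) x| ≤
      ∑ j : Fin (k + 2), ∑ i : Fin (k + 2), ENNReal.ofReal κ * T j i x := by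
    intro x
    have h1 : |L1 d κ a G (k + 2) x| ≤
        ∑ j : Fin (k + 2), ∑ i : Fin (k + 2),
          κ * (if i ≠ j then a (x i - x j) * |G (k + 1) (x ∘ j.succAbove)| else 0) := by
      show |κ * _| ≤ _
      rw [abs_mul, abs_of_pos hκ]
      simp_rw [← Finset.mul_sum]
      refine mul_le_mul_of_nonneg_left ?_ hκ.le
      refine (Finset.abs_sum_le_sum_abs _ _).trans (Finset.sum_le_sum fun j _ => ?_)
      refine (Finset.abs_sum_le_sum_abs _ _).trans (Finset.sum_le_sum fun i _ => ?_)
      by_cases h : i ≠ j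
      · simp [h, abs_mul, abs_of_nonneg (ha0 _), le_refl]
      · simp [h]
    refine (ENNReal.ofReal_le_ofReal h1).trans_eq ?_
    have hnn : ∀ j i : Fin (k + 2),
        0 ≤ κ * (if i ≠ j then a (x i - x j) * |G (k + 1) (x ∘ j.succAbove)| else 0) := by
      intro j i
      by_cases h : i ≠ j
      · rw [if_pos h]; exact mul_nonneg hκ.le (mul_nonneg (ha0 _) (abs_nonneg _))
      · rw [if_neg h, mul_zero]
    rw [ENNReal.ofReal_sum_of_nonneg fun j _ => Finset.sum_nonneg fun i _ => hnn j i]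
    refine Finset.sum_congr rfl fun j _ => ?_
    rw [ENNReal.ofReal_sum_of_nonneg fun i _ => hnn j i]
    refine Finset.sum_congr rfl fun i _ => ?_
    simp only [hT]
    by_cases h : i ≠ j
    · rw [if_pos h, if_pos h, ENNReal.ofReal_mul hκ.le, ENNReal.ofReal_mul (ha0 _)]
    · rw [if_neg h, if_neg h, mul_zero, ENNReal.ofReal_zero, mul_zero]
  calc ∫⁻ x : Fin (k + 2) → (Fin d → ℝ), ENNReal.ofReal |L1 d κ a G (k + 2) x|
      ≤ ∫⁻ x, ∑ j : Fin (k + 2), ∑ i : Fin (k + 2), ENNReal.ofReal κ * T j i x :=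
        lintegral_mono hpt
    _ = ∑ j : Fin (k + 2), ∑ i : Fin (k + 2), ∫⁻ x, ENNReal.ofReal κ * T j i x := by
        rw [lintegral_finset_sum _ fun j _ => Finset.measurable_sum _
          fun i _ => ((hTmeas j i).const_mul _)]
        exact Finset.sum_congr rfl fun j _ => lintegral_finset_sum _
          fun i _ => measurable_const.mul (hTmeas j i)
    _ = ∑ j : Fin (k + 2), ∑ i : Fin (k + 2),
          (if i ≠ j then ENNReal.ofReal κ * A else 0) := by
        refine Finset.sum_congr rfl fun j _ => Finset.sum_congr rfl fun i _ => ?_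
        rw [lintegral_const_mul _ (hTmeas j i)]
        by_cases h : i ≠ j
        · rw [if_pos h]
          simp only [hT, if_pos h]
          rw [aux_int k a ha0 hae ham hai han (G (k + 1)) (hGmeas (k + 1)) j i h]
        · rw [if_neg h]
          simp only [hT, if_neg h]
          simp
    _ = (((k + 2) * (k + 1) : ℕ) : ℝ≥0∞) * (ENNReal.ofReal κ * A) := by
        have h1 : ∀ j : Fin (k + 2), ∑ i : Fin (k + 2),
            (if i ≠ j then ENNReal.ofReal κ * A else 0) = ((k + 1 : ℕ) : ℝ≥0∞) * (ENNReal.ofReal κ * A) := by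
          intro j
          rw [← Finset.sum_filter, Finset.filter_ne' Finset.univ j, Finset.sum_const,
            Finset.card_erase_of_mem (Finset.mem_univ j), Finset.card_univ, Fintype.card_fin]
          simp [nsmul_eq_mul]
        simp_rw [h1, Finset.sum_const, Finset.card_univ, Fintype.card_fin, nsmul_eq_mul]
        push_cast
        ring


set_option maxHeartbeats 1000000 in
/-- Lemma 4.3: the relative bound `‖L₁G‖_C ≤ (κ⁻C/m)‖L₀G‖_C`; in particular, for any `δ > 0`,
if `C < δm/κ⁻` then `‖L₁G‖_C ≤ a‖L₀G‖_C` with `a = κ⁻C/m < δ`. -/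
theorem stmt2 (d : ℕ) (hd : 1 ≤ d)
    (aminus aplus : (Fin d → ℝ) → ℝ)
    (ham_nonneg : ∀ x, 0 ≤ aminus x) (ham_even : ∀ x, aminus (-x) = aminus x)
    (ham_meas : Measurable aminus) (ham_int : Integrable aminus)
    (ham_norm : ∫ x, aminus x = 1)
    (hap_nonneg : ∀ x, 0 ≤ aplus x) (hap_even : ∀ x, aplus (-x) = aplus x)
    (hap_meas : Measurable aplus) (hap_int : Integrable aplus)
    (hap_norm : ∫ x, aplus x = 1)
    (m κm κp C : ℝ) (hm : 0 < m) (hκm : 0 < κm) (hκp : 0 < κp) (hC : 0 < C)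
    (G : (n : ℕ) → (Fin n → (Fin d → ℝ)) → ℝ) (hGmeas : ∀ n, Measurable (G n))
    (hG : normLC d C (L0 d m κm aminus G) < ⊤) :
    normLC d C (L1 d κm aminus G)
        ≤ ENNReal.ofReal (κm * C / m) * normLC d C (L0 d m κm aminus G) ∧
      ∀ δ : ℝ, 0 < δ → C < δ * m / κm → κm * C / m < δ := by
  constructor
  · -- main bound
    set A : ℕ → ℝ≥0∞ :=
      fun n => ∫⁻ x : Fin n → (Fin d → ℝ), ENNReal.ofReal |G n x| with hA
    set B : ℕ → ℝ≥0∞ :=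
      fun n => ∫⁻ x : Fin n → (Fin d → ℝ), ENNReal.ofReal |L0 d m κm aminus G n x| with hB
    have hAB : ∀ n : ℕ, ENNReal.ofReal (m * n) * A n ≤ B n := by
      intro n
      rw [hA, hB, ← lintegral_const_mul _ ((hGmeas n).abs.ennreal_ofReal)]
      refine lintegral_mono fun x => ?_
      rw [← ENNReal.ofReal_mul (by positivity)]
      refine ENNReal.ofReal_le_ofReal ?_
      have hE := pairEnergy_nonneg aminus ham_nonneg n x
      have habs : |L0 d m κm aminus G n x|
          = (m * n + κm * pairEnergy d aminus n x) * |G n x| := by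
        show |(-(m * ↑n + κm * pairEnergy d aminus n x) * G n x)| = _
        rw [abs_mul, abs_neg, abs_of_nonneg (by positivity)]
      rw [habs]
      have hG0 : (0:ℝ) ≤ |G n x| := abs_nonneg _
      nlinarith [mul_nonneg (mul_nonneg hκm.le hE) hG0]
    set f : ℕ → ℝ≥0∞ := fun n => ENNReal.ofReal (C ^ n / n.factorial) *
      ∫⁻ x : Fin n → (Fin d → ℝ), ENNReal.ofReal |L1 d κm aminus G n x| with hf
    set h : ℕ → ℝ≥0∞ := fun n =>
      ENNReal.ofReal (κm * C / m) * (ENNReal.ofReal (C ^ n / n.factorial) * B n) with hh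
    have hf0 : f 0 = 0 := by simp [hf, L1]
    have hf1 : f 1 = 0 := by simp [hf, L1]
    have hfh : ∀ k : ℕ, f (k + 2) ≤ h (k + 1) := by
      intro k
      have h1 := aux_L1 k κm hκm aminus ham_nonneg ham_even ham_meas ham_int ham_norm G hGmeas
      calc f (k + 2)
          ≤ ENNReal.ofReal (C ^ (k + 2) / (k + 2).factorial) *
            ((((k + 2) * (k + 1) : ℕ) : ℝ≥0∞) * (ENNReal.ofReal κm * A (k + 1))) :=
            mul_le_mul_right h1 _
        _ = (ENNReal.ofReal (C ^ (k + 2) / (k + 2).factorial) *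
              (((k + 2) * (k + 1) : ℕ) : ℝ≥0∞) * ENNReal.ofReal κm) * A (k + 1) := by ring
        _ = ENNReal.ofReal (κm * C / m * (C ^ (k + 1) / (k + 1).factorial)) *
              (ENNReal.ofReal (m * ((k + 1 : ℕ) : ℝ)) * A (k + 1)) := by
            rw [← mul_assoc]
            congr 1
            rw [show ((((k + 2) * (k + 1) : ℕ)) : ℝ≥0∞)
                = ENNReal.ofReal ((((k + 2) * (k + 1) : ℕ)) : ℝ) from (ENNReal.ofReal_natCast _).symm,
              ← ENNReal.ofReal_mul (by positivity), ← ENNReal.ofReal_mul (by positivity),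
              ← ENNReal.ofReal_mul (by positivity)]
            congr 1
            have hfact : ((k + 2).factorial : ℝ) = ((k + 2) : ℝ) * ((k + 1).factorial : ℝ) := by
              rw [Nat.factorial_succ]; push_cast; ring
            have h2 : ((k + 1).factorial : ℝ) ≠ 0 := by positivity
            field_simp [hfact]
            push_cast [hfact]
            ring
        _ ≤ ENNReal.ofReal (κm * C / m * (C ^ (k + 1) / (k + 1).factorial)) * B (k + 1) :=
            mul_le_mul_right (hAB (k + 1)) _
        _ = h (k + 1) := by
            rw [hh, ENNReal.ofReal_mul (by positivity), mul_assoc]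
    have e1 : (∑' n, f n) = f 0 + ∑' k, f (k + 1) := tsum_eq_zero_add' ENNReal.summable
    have e2 : (∑' k, f (k + 1)) = f 1 + ∑' k, f (k + 2) :=
      tsum_eq_zero_add' ENNReal.summable
    have e3 : (∑' n, h n) = h 0 + ∑' k, h (k + 1) := tsum_eq_zero_add' ENNReal.summable
    calc normLC d C (L1 d κm aminus G) = ∑' n, f n := rfl
      _ = ∑' k, f (k + 2) := by rw [e1, e2, hf0, hf1, zero_add, zero_add]
      _ ≤ ∑' k, h (k + 1) := ENNReal.tsum_le_tsum hfh
      _ ≤ h 0 + ∑' k, h (k + 1) := le_add_self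
      _ = ∑' n, h n := e3.symm
      _ = ENNReal.ofReal (κm * C / m) * normLC d C (L0 d m κm aminus G) := by
          simp only [hh]
          exact ENNReal.tsum_mul_left
  · intro δ hδ hCδ
    rw [div_lt_iff₀ hm]
    have h2 : C * κm < δ * m := (lt_div_iff₀ hκm).mp hCδ
    linarith [mul_comm κm C]
end

section
/- For every sequence G = (G⁽ⁿ⁾)_{n≥0} with ‖L₀G‖_C < ∞ one has ‖L₂G‖_C ≤ (κ⁺ / m) ‖L₀G‖_C. In particular, for any δ > 0, if κ⁺ < δ m then ‖L₂G‖_C ≤ a ‖L₀G‖_C with a = κ⁺/m < δ. (Lemma 4.4: relative bound of the hopping part L₂ with respect to the diagonal part L₀.) -/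
open MeasureTheory ENNReal

/-- The hopping part
`(L₂G)⁽ⁿ⁾(x₁,…,xₙ) = κ⁺ Σ_j ∫_{ℝ^d} a⁺(y-xⱼ) G⁽ⁿ⁾(x₁,…,x_{j-1},y,x_{j+1},…,xₙ) dy`. -/
noncomputable def L2 (d : ℕ) (κp : ℝ) (aplus : (Fin d → ℝ) → ℝ)
    (G : (n : ℕ) → (Fin n → (Fin d → ℝ)) → ℝ) :
    (n : ℕ) → (Fin n → (Fin d → ℝ)) → ℝ :=
  fun n x =>
    κp * ∑ j : Fin n, ∫ y : Fin d → ℝ, aplus (y - x j) * G n (Function.update x j y)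

section Aux

/-- `update (insertNth j t r) j y = insertNth j y r`. -/
lemma aux_update_insertNth {k : ℕ} {E : Type*} (j : Fin (k + 1)) (t y : E)
    (r : Fin k → E) :
    Function.update (j.insertNth t r : Fin (k + 1) → E) j y
      = (j.insertNth y r : Fin (k + 1) → E) := by
  funext i
  by_cases hij : i = j
  · subst hij; simp
  · obtain ⟨l, rfl⟩ := Fin.exists_succAbove_eq hij
    rw [Function.update_of_ne hij]
    simp

lemma aux_ofReal_integral_abs_le {α : Type*} [MeasurableSpace α] (μ : Measure α) (f : α → ℝ) :
    ENNReal.ofReal (∫ x, |f x| ∂μ) ≤ ∫⁻ x, ENNReal.ofReal |f x| ∂μ := by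
  by_cases h : Integrable (fun x => |f x|) μ
  · exact (ofReal_integral_eq_lintegral_ofReal h (Filter.Eventually.of_forall
      fun x => abs_nonneg _)).le
  · rw [integral_undef h]; simp

/-- Measurability of `(x, y) ↦ Function.update x j y`. -/
lemma aux_measurable_update {n : ℕ} {E : Type*} [MeasurableSpace E] (j : Fin n) :
    Measurable fun p : (Fin n → E) × E => Function.update p.1 j p.2 := by
  apply measurable_pi_lambda
  intro i
  by_cases hij : i = j
  · subst hij
    simpa only [Function.update_self] using (measurable_snd :
      Measurable fun p : (Fin n → E) × E => p.2)
  · simp only [Function.update_of_ne hij]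
    exact (measurable_pi_apply i).comp' measurable_fst

/-- key Fubini-translation identity for a fixed coordinate `j`. -/
lemma aux_keyJ (d k : ℕ) (a : (Fin d → ℝ) → ℝ) (ha_nonneg : ∀ x, 0 ≤ a x)
    (ha_meas : Measurable a) (ha_int : Integrable a) (ha_norm : ∫ x, a x = 1)
    (G : (Fin (k + 1) → (Fin d → ℝ)) → ℝ) (hG : Measurable G) (j : Fin (k + 1)) :
    ∫⁻ x : Fin (k + 1) → (Fin d → ℝ), ∫⁻ y : Fin d → ℝ,
        ENNReal.ofReal (a (y - x j)) * ENNReal.ofReal |G (Function.update x j y)|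
      = ∫⁻ x : Fin (k + 1) → (Fin d → ℝ), ENNReal.ofReal |G x| := by
  set e := MeasurableEquiv.piFinSuccAbove (fun _ : Fin (k + 1) => (Fin d → ℝ)) j with he
  have hmp : MeasurePreserving e volume volume := volume_preserving_piFinSuccAbove _ j
  have he_symm : ∀ p : (Fin d → ℝ) × (Fin k → (Fin d → ℝ)), e.symm p = j.insertNth p.1 p.2 := by
    intro p
    simp [he, MeasurableEquiv.piFinSuccAbove_symm_apply, Fin.insertNthEquiv]
  -- measurability facts
  have hg : Measurable fun p : (Fin d → ℝ) × (Fin k → (Fin d → ℝ)) => G (j.insertNth p.1 p.2) := by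
    simpa only [he_symm] using hG.comp' e.symm.measurable
  have hH : Measurable fun q : ((Fin d → ℝ) × (Fin k → (Fin d → ℝ))) × (Fin d → ℝ) =>
      ENNReal.ofReal (a (q.2 - q.1.1)) * ENNReal.ofReal |G (j.insertNth q.2 q.1.2)| := by
    apply Measurable.fun_mul
    · exact (ha_meas.comp' (measurable_snd.sub measurable_fst.fst)).ennreal_ofReal
    · exact ((hg.comp' (measurable_snd.prodMk measurable_fst.snd)).abs).ennreal_ofReal
  have hF : Measurable fun x : Fin (k + 1) → (Fin d → ℝ) => ∫⁻ y : Fin d → ℝ,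
      ENNReal.ofReal (a (y - x j)) * ENNReal.ofReal |G (Function.update x j y)| := by
    apply Measurable.lintegral_prod_right
    apply Measurable.fun_mul
    · exact (ha_meas.comp' (measurable_snd.sub
        ((measurable_pi_apply j).comp' measurable_fst))).ennreal_ofReal
    · exact ((hG.comp' (aux_measurable_update j)).abs).ennreal_ofReal
  -- pull back along the measure-preserving equivalence `e.symm`
  have h1 : (∫⁻ x : Fin (k + 1) → (Fin d → ℝ), ∫⁻ y : Fin d → ℝ,
        ENNReal.ofReal (a (y - x j)) * ENNReal.ofReal |G (Function.update x j y)|)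
      = ∫⁻ p : (Fin d → ℝ) × (Fin k → (Fin d → ℝ)), ∫⁻ y : Fin d → ℝ,
          ENNReal.ofReal (a (y - p.1)) * ENNReal.ofReal |G (j.insertNth y p.2)| := by
    rw [← (hmp.symm e).lintegral_comp hF]
    refine lintegral_congr fun p => ?_
    rw [he_symm p]
    refine lintegral_congr fun y => ?_
    rw [Fin.insertNth_apply_same, aux_update_insertNth]
  rw [h1]
  have hone : ∀ y : Fin d → ℝ, (∫⁻ t : Fin d → ℝ, ENNReal.ofReal (a (y - t))) = 1 := by
    intro y
    have hmpt : MeasurePreserving (fun t : Fin d → ℝ => y - t) volume volume :=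
      Measure.measurePreserving_sub_left volume y
    rw [hmpt.lintegral_comp ha_meas.ennreal_ofReal]
    rw [← ofReal_integral_eq_lintegral_ofReal ha_int
      (Filter.Eventually.of_forall fun x => ha_nonneg x), ha_norm, ENNReal.ofReal_one]
  -- Fubini: integrate the first coordinate against `a`
  have hPhi : Measurable fun p : (Fin d → ℝ) × (Fin k → (Fin d → ℝ)) => ∫⁻ y : Fin d → ℝ,
      ENNReal.ofReal (a (y - p.1)) * ENNReal.ofReal |G (j.insertNth y p.2)| :=
    hH.lintegral_prod_right'
  have h2 : ∀ r : Fin k → (Fin d → ℝ), (∫⁻ t : Fin d → ℝ, ∫⁻ y : Fin d → ℝ,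
        ENNReal.ofReal (a (y - t)) * ENNReal.ofReal |G (j.insertNth y r)|)
      = ∫⁻ y : Fin d → ℝ, ENNReal.ofReal |G (j.insertNth y r)| := by
    intro r
    rw [lintegral_lintegral_swap]
    · refine lintegral_congr fun y => ?_
      rw [lintegral_mul_const _ ((ha_meas.comp'
          (measurable_const_sub y)).ennreal_ofReal), hone y, one_mul]
    · apply Measurable.aemeasurable
      apply Measurable.fun_mul
      · exact (ha_meas.comp' (measurable_snd.sub measurable_fst)).ennreal_ofReal
      · exact ((hg.comp' (measurable_snd.prodMk measurable_const)).abs).ennreal_ofReal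
  calc (∫⁻ p : (Fin d → ℝ) × (Fin k → (Fin d → ℝ)), ∫⁻ y : Fin d → ℝ,
          ENNReal.ofReal (a (y - p.1)) * ENNReal.ofReal |G (j.insertNth y p.2)|)
      = ∫⁻ r : Fin k → (Fin d → ℝ), ∫⁻ t : Fin d → ℝ, ∫⁻ y : Fin d → ℝ,
          ENNReal.ofReal (a (y - t)) * ENNReal.ofReal |G (j.insertNth y r)| :=
        lintegral_prod_symm' _ hPhi
    _ = ∫⁻ r : Fin k → (Fin d → ℝ), ∫⁻ y : Fin d → ℝ, ENNReal.ofReal |G (j.insertNth y r)| :=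
        lintegral_congr fun r => h2 r
    _ = ∫⁻ p : (Fin d → ℝ) × (Fin k → (Fin d → ℝ)), ENNReal.ofReal |G (j.insertNth p.1 p.2)| :=
        (lintegral_prod_symm' _ (hg.abs.ennreal_ofReal)).symm
    _ = ∫⁻ x : Fin (k + 1) → (Fin d → ℝ), ENNReal.ofReal |G x| := by
        rw [← (hmp.symm e).lintegral_comp (hG.abs.ennreal_ofReal)]
        exact lintegral_congr fun p => by rw [he_symm p]

end Aux

/-- Lemma 4.4: the relative bound `‖L₂G‖_C ≤ (κ⁺/m)‖L₀G‖_C`; in particular, for any `δ > 0`,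
if `κ⁺ < δm` then `‖L₂G‖_C ≤ a‖L₀G‖_C` with `a = κ⁺/m < δ`. -/
theorem stmt4 (d : ℕ) (hd : 1 ≤ d)
    (aminus aplus : (Fin d → ℝ) → ℝ)
    (ham_nonneg : ∀ x, 0 ≤ aminus x) (ham_even : ∀ x, aminus (-x) = aminus x)
    (ham_meas : Measurable aminus) (ham_int : Integrable aminus)
    (ham_norm : ∫ x, aminus x = 1)
    (hap_nonneg : ∀ x, 0 ≤ aplus x) (hap_even : ∀ x, aplus (-x) = aplus x)
    (hap_meas : Measurable aplus) (hap_int : Integrable aplus)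
    (hap_norm : ∫ x, aplus x = 1)
    (m κm κp C : ℝ) (hm : 0 < m) (hκm : 0 < κm) (hκp : 0 < κp) (hC : 0 < C)
    (G : (n : ℕ) → (Fin n → (Fin d → ℝ)) → ℝ) (hGmeas : ∀ n, Measurable (G n))
    (hG : normLC d C (L0 d m κm aminus G) < ⊤) :
    normLC d C (L2 d κp aplus G)
        ≤ ENNReal.ofReal (κp / m) * normLC d C (L0 d m κm aminus G) ∧
      ∀ δ : ℝ, 0 < δ → κp < δ * m → κp / m < δ := by
  constructor
  · -- main inequality
    set I : ℕ → ℝ≥0∞ := fun n => ∫⁻ x : Fin n → (Fin d → ℝ), ENNReal.ofReal |G n x| with hI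
    -- per-n bound for L2
    have hL2 : ∀ n : ℕ, (∫⁻ x : Fin n → (Fin d → ℝ), ENNReal.ofReal |L2 d κp aplus G n x|)
        ≤ ENNReal.ofReal κp * n * I n := by
      intro n
      -- pointwise bound
      have hpt : ∀ x : Fin n → (Fin d → ℝ), ENNReal.ofReal |L2 d κp aplus G n x|
          ≤ ENNReal.ofReal κp * ∑ j : Fin n, ∫⁻ y : Fin d → ℝ,
              ENNReal.ofReal (aplus (y - x j)) * ENNReal.ofReal |G n (Function.update x j y)| := by
        intro x
        have h1 : |L2 d κp aplus G n x| = κp * |∑ j : Fin n,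
            ∫ y : Fin d → ℝ, aplus (y - x j) * G n (Function.update x j y)| := by
          rw [L2, abs_mul, abs_of_pos hκp]
        rw [h1, ENNReal.ofReal_mul hκp.le]
        refine mul_le_mul_right ?_ _
        calc ENNReal.ofReal
              |∑ j : Fin n, ∫ y : Fin d → ℝ, aplus (y - x j) * G n (Function.update x j y)|
            ≤ ENNReal.ofReal (∑ j : Fin n,
                |∫ y : Fin d → ℝ, aplus (y - x j) * G n (Function.update x j y)|) :=
              ENNReal.ofReal_le_ofReal (Finset.abs_sum_le_sum_abs _ _)
          _ = ∑ j : Fin n, ENNReal.ofReal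
                |∫ y : Fin d → ℝ, aplus (y - x j) * G n (Function.update x j y)| :=
              ENNReal.ofReal_sum_of_nonneg fun j _ => abs_nonneg _
          _ ≤ ∑ j : Fin n, ∫⁻ y : Fin d → ℝ,
                ENNReal.ofReal (aplus (y - x j))
                  * ENNReal.ofReal |G n (Function.update x j y)| := by
              refine Finset.sum_le_sum fun j _ => ?_
              calc ENNReal.ofReal
                    |∫ y : Fin d → ℝ, aplus (y - x j) * G n (Function.update x j y)|
                  ≤ ENNReal.ofReal
                      (∫ y : Fin d → ℝ, |aplus (y - x j) * G n (Function.update x j y)|) := by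
                    apply ENNReal.ofReal_le_ofReal
                    simpa only [Real.norm_eq_abs] using norm_integral_le_integral_norm
                      (fun y : Fin d → ℝ => aplus (y - x j) * G n (Function.update x j y))
                _ ≤ ∫⁻ y : Fin d → ℝ,
                      ENNReal.ofReal |aplus (y - x j) * G n (Function.update x j y)| :=
                    aux_ofReal_integral_abs_le _ _
                _ = ∫⁻ y : Fin d → ℝ, ENNReal.ofReal (aplus (y - x j)) *
                      ENNReal.ofReal |G n (Function.update x j y)| := by
                    refine lintegral_congr fun y => ?_
                    rw [abs_mul, abs_of_nonneg (hap_nonneg _), ENNReal.ofReal_mul (hap_nonneg _)]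
      -- measurability of each j-summand, as a function of x
      have hmeasj : ∀ j : Fin n, Measurable fun x : Fin n → (Fin d → ℝ) => ∫⁻ y : Fin d → ℝ,
          ENNReal.ofReal (aplus (y - x j)) * ENNReal.ofReal |G n (Function.update x j y)| := by
        intro j
        apply Measurable.lintegral_prod_right
        apply Measurable.fun_mul
        · exact (hap_meas.comp' (measurable_snd.sub
            ((measurable_pi_apply j).comp' measurable_fst))).ennreal_ofReal
        · exact (((hGmeas n).comp' (aux_measurable_update j)).abs).ennreal_ofReal
      calc (∫⁻ x : Fin n → (Fin d → ℝ), ENNReal.ofReal |L2 d κp aplus G n x|)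
          ≤ ∫⁻ x : Fin n → (Fin d → ℝ), ENNReal.ofReal κp * ∑ j : Fin n, ∫⁻ y : Fin d → ℝ,
              ENNReal.ofReal (aplus (y - x j)) * ENNReal.ofReal |G n (Function.update x j y)| :=
            lintegral_mono hpt
        _ = ENNReal.ofReal κp * ∫⁻ x : Fin n → (Fin d → ℝ), ∑ j : Fin n, ∫⁻ y : Fin d → ℝ,
              ENNReal.ofReal (aplus (y - x j)) * ENNReal.ofReal |G n (Function.update x j y)| :=
            lintegral_const_mul _ (Finset.measurable_sum _ fun j _ => hmeasj j)
        _ = ENNReal.ofReal κp * ∑ j : Fin n, ∫⁻ x : Fin n → (Fin d → ℝ), ∫⁻ y : Fin d → ℝ,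
              ENNReal.ofReal (aplus (y - x j)) * ENNReal.ofReal |G n (Function.update x j y)| := by
            rw [lintegral_finset_sum _ fun j _ => hmeasj j]
        _ = ENNReal.ofReal κp * ∑ _j : Fin n, I n := by
            congr 1
            refine Finset.sum_congr rfl fun j _ => ?_
            match n, j with
            | (k + 1), j =>
              exact aux_keyJ d k aplus hap_nonneg hap_meas hap_int hap_norm (G (k + 1))
                (hGmeas (k + 1)) j
        _ = ENNReal.ofReal κp * n * I n := by
            rw [Finset.sum_const, Finset.card_univ, Fintype.card_fin, nsmul_eq_mul, mul_assoc]
    -- per-n lower bound for L0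
    have hL0 : ∀ n : ℕ, ENNReal.ofReal m * n * I n
        ≤ ∫⁻ x : Fin n → (Fin d → ℝ), ENNReal.ofReal |L0 d m κm aminus G n x| := by
      intro n
      have hpt : ∀ x : Fin n → (Fin d → ℝ), ENNReal.ofReal (m * n) * ENNReal.ofReal |G n x|
          ≤ ENNReal.ofReal |L0 d m κm aminus G n x| := by
        intro x
        rw [← ENNReal.ofReal_mul (by positivity)]
        apply ENNReal.ofReal_le_ofReal
        have hE : 0 ≤ pairEnergy d aminus n x := by
          apply Finset.sum_nonneg; intro i _
          apply Finset.sum_nonneg; intro j _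
          by_cases h : i ≠ j
          · simpa [h] using ham_nonneg _
          · simp [h]
        have h1 : |L0 d m κm aminus G n x|
            = (m * n + κm * pairEnergy d aminus n x) * |G n x| := by
          rw [L0, abs_mul, abs_neg, abs_of_nonneg (by positivity)]
        rw [h1]
        apply mul_le_mul_of_nonneg_right _ (abs_nonneg _)
        nlinarith [hE, hκm.le]
      have hmG : Measurable fun x : Fin n → (Fin d → ℝ) => ENNReal.ofReal |G n x| :=
        ((hGmeas n).abs).ennreal_ofReal
      calc ENNReal.ofReal m * (n : ℝ≥0∞) * I n
          = ∫⁻ x : Fin n → (Fin d → ℝ), ENNReal.ofReal (m * n) * ENNReal.ofReal |G n x| := by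
            rw [lintegral_const_mul _ hmG, ENNReal.ofReal_mul hm.le, ENNReal.ofReal_natCast]
        _ ≤ ∫⁻ x : Fin n → (Fin d → ℝ), ENNReal.ofReal |L0 d m κm aminus G n x| :=
            lintegral_mono hpt
    -- combine
    rw [normLC, normLC, ← ENNReal.tsum_mul_left]
    refine ENNReal.tsum_le_tsum fun n => ?_
    calc ENNReal.ofReal (C ^ n / n.factorial)
            * ∫⁻ x : Fin n → (Fin d → ℝ), ENNReal.ofReal |L2 d κp aplus G n x|
        ≤ ENNReal.ofReal (C ^ n / n.factorial) * (ENNReal.ofReal κp * n * I n) :=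
          mul_le_mul_right (hL2 n) _
      _ = ENNReal.ofReal (C ^ n / n.factorial)
            * (ENNReal.ofReal (κp / m) * (ENNReal.ofReal m * n * I n)) := by
          congr 1
          rw [← mul_assoc, ← mul_assoc, ← ENNReal.ofReal_mul (by positivity),
            div_mul_cancel₀ _ hm.ne']
      _ ≤ ENNReal.ofReal (C ^ n / n.factorial) * (ENNReal.ofReal (κp / m)
            * ∫⁻ x : Fin n → (Fin d → ℝ), ENNReal.ofReal |L0 d m κm aminus G n x|) :=
          mul_le_mul_right (mul_le_mul_right (hL0 n) _) _
      _ = ENNReal.ofReal (κp / m) * (ENNReal.ofReal (C ^ n / n.factorial)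
            * ∫⁻ x : Fin n → (Fin d → ℝ), ENNReal.ofReal |L0 d m κm aminus G n x|) := by
          ring
  · intro δ hδ hlt
    rw [div_lt_iff₀ hm]
    linarith
end

section
/- Assume C κ⁻ a⁻(x) ≥ 2 κ⁺ a⁺(x) for all x ∈ ℝ^d and m > 2(κ⁻ C + κ⁺). Then for every sequence G = (G⁽ⁿ⁾)_{n≥0} with each G⁽ⁿ⁾ symmetric under permutations of its arguments and ‖L₀G‖_C < ∞, one has ‖L₁G + L₂G + L₃G‖_C ≤ a ‖L₀G‖_C with a := κ⁻C/m + κ⁺/m + 1/2, and a < 1. (The key relative bound in the proof of Theorem 4.6, which yields that L̂ = L₀ + L₁ + L₂ + L₃ generates a holomorphic semigroup on 𝓛_C.) -/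
open MeasureTheory ENNReal

/-- The birth part `L₃`. -/
noncomputable def L3 (d : ℕ) (κp : ℝ) (aplus : (Fin d → ℝ) → ℝ)
    (G : (n : ℕ) → (Fin n → (Fin d → ℝ)) → ℝ) :
    (n : ℕ) → (Fin n → (Fin d → ℝ)) → ℝ :=
  fun n x =>
    κp * ∑ j : Fin n, ∫ y : Fin d → ℝ, aplus (y - x j) * G (n + 1) (Fin.snoc x y)

/-- `G = (G⁽ⁿ⁾)` has components symmetric under permutations of the arguments. -/
def IsSymmSeq (d : ℕ) (G : (n : ℕ) → (Fin n → (Fin d → ℝ)) → ℝ) : Prop :=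
  ∀ (n : ℕ) (σ : Equiv.Perm (Fin n)) (x : Fin n → (Fin d → ℝ)), G n (x ∘ σ) = G n x

section Aux

variable {d : ℕ}

private lemma kernelInt (a : (Fin d → ℝ) → ℝ) (h0 : ∀ x, 0 ≤ a x) (hm : Measurable a)
    (hi : Integrable a) (hn : ∫ x, a x = 1) (y : Fin d → ℝ) :
    ∫⁻ z : Fin d → ℝ, ENNReal.ofReal (a (y - z)) = 1 := by
  have h1 : ∫⁻ z, ENNReal.ofReal (a z) = 1 := by
    rw [← ofReal_integral_eq_lintegral_ofReal hi (Filter.Eventually.of_forall h0), hn]; simp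
  rw [← h1]
  exact (Measure.measurePreserving_sub_left volume y).lintegral_comp
    (ENNReal.measurable_ofReal.comp hm)

private lemma lintegral_split {n : ℕ} (j : Fin (n+1)) (f : (Fin (n+1) → Fin d → ℝ) → ℝ≥0∞)
    (hf : Measurable f) :
    ∫⁻ z : Fin (n+1) → Fin d → ℝ, f z
      = ∫⁻ r : Fin n → Fin d → ℝ, ∫⁻ t : Fin d → ℝ, f (j.insertNth t r) := by
  have h := (measurePreserving_piFinSuccAbove
    (fun _ : Fin (n+1) => (volume : Measure (Fin d → ℝ))) j).symm
  rw [volume_pi, ← h.lintegral_comp hf]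
  rw [lintegral_prod_symm
    (fun a => f ((MeasurableEquiv.piFinSuccAbove (fun _ => Fin d → ℝ) j).symm a))
    (hf.comp h.measurable).aemeasurable]
  rfl

private lemma lintegral_perm {n : ℕ} (σ : Equiv.Perm (Fin n))
    (f : (Fin n → Fin d → ℝ) → ℝ≥0∞) (hf : Measurable f) :
    ∫⁻ x, f (x ∘ σ) = ∫⁻ x, f x := by
  have h := measurePreserving_piCongrLeft (fun _ : Fin n => (volume : Measure (Fin d → ℝ))) σ.symm
  rw [volume_pi, ← h.lintegral_comp hf]
  congr 1
  funext x
  congr 1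
  funext a
  have := Equiv.piCongrLeft_apply_apply (fun _ : Fin n => Fin d → ℝ) σ.symm x (σ a)
  simp only [Equiv.symm_apply_apply, Equiv.symm_symm] at this ⊢
  exact (this.trans rfl).symm

private lemma meas_kernel {n : ℕ} (a : (Fin d → ℝ) → ℝ) (ham : Measurable a)
    (g : (Fin n → Fin d → ℝ) → ℝ) (hg : Measurable g) (i j : Fin n) :
    Measurable fun z : Fin n → Fin d → ℝ =>
      ENNReal.ofReal (a (z i - z j)) * ENNReal.ofReal |g z| :=
  ((ham.comp ((measurable_pi_apply i).sub (measurable_pi_apply j))).ennreal_ofReal).mul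
    (hg.abs.ennreal_ofReal)

private lemma pair_exchange {n : ℕ} (a : (Fin d → ℝ) → ℝ) (ham : Measurable a)
    (g : (Fin n → Fin d → ℝ) → ℝ) (hg : Measurable g)
    (hsym : ∀ (σ : Equiv.Perm (Fin n)) x, g (x ∘ σ) = g x)
    {i j i' j' : Fin n} (hij : i ≠ j) (hij' : i' ≠ j') :
    ∫⁻ z, ENNReal.ofReal (a (z i - z j)) * ENNReal.ofReal |g z|
      = ∫⁻ z, ENNReal.ofReal (a (z i' - z j')) * ENNReal.ofReal |g z| := by
  obtain ⟨σ, hσi, hσj⟩ : ∃ σ : Equiv.Perm (Fin n), σ i' = i ∧ σ j' = j := by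
    have h1 : (Equiv.swap i' i) j' ≠ i := by
      intro h
      exact hij' ((Equiv.swap i' i).injective (h.trans (Equiv.swap_apply_left i' i).symm)).symm
    refine ⟨(Equiv.swap i' i).trans (Equiv.swap ((Equiv.swap i' i) j') j), ?_, ?_⟩
    · simp only [Equiv.trans_apply, Equiv.swap_apply_left]
      exact Equiv.swap_apply_of_ne_of_ne h1.symm hij
    · simp only [Equiv.trans_apply, Equiv.swap_apply_left]
  have key := lintegral_perm σ
    (fun z => ENNReal.ofReal (a (z i' - z j')) * ENNReal.ofReal |g z|)
    (meas_kernel a ham g hg i' j')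
  rw [← key]
  refine lintegral_congr fun x => ?_
  show ENNReal.ofReal (a (x i - x j)) * ENNReal.ofReal |g x|
    = ENNReal.ofReal (a ((x ∘ σ) i' - (x ∘ σ) j')) * ENNReal.ofReal |g (x ∘ σ)|
  rw [hsym σ x]
  simp only [Function.comp_apply, hσi, hσj]


private lemma meas_update {n : ℕ} (j : Fin n) :
    Measurable fun p : (Fin n → Fin d → ℝ) × (Fin d → ℝ) => Function.update p.1 j p.2 := by
  rw [measurable_pi_iff]
  intro k
  rcases eq_or_ne k j with rfl | hk
  · simpa using measurable_snd
  · simp only [Function.update_of_ne hk]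
    exact (measurable_pi_apply k).comp measurable_fst

private lemma meas_snoc {n : ℕ} :
    Measurable fun p : (Fin n → Fin d → ℝ) × (Fin d → ℝ) =>
      (Fin.snoc p.1 p.2 : Fin (n+1) → Fin d → ℝ) := by
  rw [measurable_pi_iff]
  intro k
  induction k using Fin.lastCases with
  | last => simpa using measurable_snd
  | cast i =>
    simp
    exact (measurable_pi_apply i).comp measurable_fst

private lemma update_insertNth {n : ℕ} (j : Fin (n+1)) (t y : Fin d → ℝ)
    (r : Fin n → Fin d → ℝ) :
    Function.update (j.insertNth t r : Fin (n+1) → Fin d → ℝ) j y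
      = (j.insertNth y r : Fin (n+1) → Fin d → ℝ) := by
  funext k
  rcases eq_or_ne k j with rfl | hk
  · simp
  · obtain ⟨i, rfl⟩ := Fin.exists_succAbove_eq hk
    rw [Function.update_of_ne hk]
    simp

private lemma meas_insertNth_left {n : ℕ} (j : Fin (n+1)) (r : Fin n → Fin d → ℝ) :
    Measurable fun y : Fin d → ℝ => (j.insertNth y r : Fin (n+1) → Fin d → ℝ) := by
  rw [measurable_pi_iff]
  intro k
  rcases eq_or_ne k j with rfl | hk
  · simp only [Fin.insertNth_apply_same]; exact measurable_id
  · obtain ⟨i, rfl⟩ := Fin.exists_succAbove_eq hk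
    simp only [Fin.insertNth_apply_succAbove]; exact measurable_const

private lemma term_L1 {n : ℕ} (a : (Fin d → ℝ) → ℝ) (h0 : ∀ x, 0 ≤ a x) (ham : Measurable a)
    (hai : Integrable a) (han : ∫ x, a x = 1)
    (g : (Fin n → Fin d → ℝ) → ℝ) (hg : Measurable g) {i j : Fin (n+1)} (hij : i ≠ j) :
    ∫⁻ x : Fin (n+1) → Fin d → ℝ,
        ENNReal.ofReal (a (x i - x j)) * ENNReal.ofReal |g (x ∘ j.succAbove)|
      = ∫⁻ r : Fin n → Fin d → ℝ, ENNReal.ofReal |g r| := by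
  have hcomp : Measurable fun x : Fin (n+1) → Fin d → ℝ => x ∘ j.succAbove := by
    rw [measurable_pi_iff]; exact fun k => measurable_pi_apply _
  have hmeas : Measurable fun x : Fin (n+1) → Fin d → ℝ =>
      ENNReal.ofReal (a (x i - x j)) * ENNReal.ofReal |g (x ∘ j.succAbove)| :=
    ((ham.comp ((measurable_pi_apply i).sub (measurable_pi_apply j))).ennreal_ofReal).mul
      (((hg.comp hcomp)).abs.ennreal_ofReal)
  rw [lintegral_split j _ hmeas]
  obtain ⟨k, hk⟩ := Fin.exists_succAbove_eq hij
  refine lintegral_congr fun r => ?_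
  have h1 : ∀ t : Fin d → ℝ, (j.insertNth t r : Fin (n+1) → Fin d → ℝ) ∘ j.succAbove = r := by
    intro t; funext i'; simp [Function.comp]
  have h2 : ∀ t : Fin d → ℝ, (j.insertNth t r : Fin (n+1) → Fin d → ℝ) i = r k := by
    intro t; rw [← hk]; simp
  have h3 : ∀ t : Fin d → ℝ, (j.insertNth t r : Fin (n+1) → Fin d → ℝ) j = t := by
    intro t; simp
  simp_rw [h1, h2, h3]
  have hm1 : Measurable fun t : Fin d → ℝ => ENNReal.ofReal (a (r k - t)) :=
    (ham.comp (measurable_const.sub measurable_id)).ennreal_ofReal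
  rw [lintegral_mul_const _ hm1, kernelInt a h0 ham hai han (r k), one_mul]

private lemma term_L2 {n : ℕ} (a : (Fin d → ℝ) → ℝ) (h0 : ∀ x, 0 ≤ a x) (ham : Measurable a)
    (hai : Integrable a) (han : ∫ x, a x = 1)
    (g : (Fin (n+1) → Fin d → ℝ) → ℝ) (hg : Measurable g) (j : Fin (n+1)) :
    ∫⁻ x : Fin (n+1) → Fin d → ℝ, ∫⁻ y : Fin d → ℝ,
        ENNReal.ofReal (a (y - x j)) * ENNReal.ofReal |g (Function.update x j y)|
      = ∫⁻ x : Fin (n+1) → Fin d → ℝ, ENNReal.ofReal |g x| := by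
  have hF : Measurable fun p : (Fin (n+1) → Fin d → ℝ) × (Fin d → ℝ) =>
      ENNReal.ofReal (a (p.2 - p.1 j)) * ENNReal.ofReal |g (Function.update p.1 j p.2)| :=
    ((ham.comp (measurable_snd.sub ((measurable_pi_apply j).comp measurable_fst))).ennreal_ofReal).mul
      ((hg.comp (meas_update j)).abs.ennreal_ofReal)
  have hout : Measurable fun x : Fin (n+1) → Fin d → ℝ =>
      ∫⁻ y, ENNReal.ofReal (a (y - x j)) * ENNReal.ofReal |g (Function.update x j y)| :=
    hF.lintegral_prod_right'
  rw [lintegral_split j _ hout, lintegral_split j (fun x => ENNReal.ofReal |g x|)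
    (hg.abs.ennreal_ofReal)]
  refine lintegral_congr fun r => ?_
  have key : ∀ t y : Fin d → ℝ,
      ENNReal.ofReal (a (y - (j.insertNth t r : Fin (n+1) → Fin d → ℝ) j)) *
          ENNReal.ofReal |g (Function.update (j.insertNth t r : Fin (n+1) → Fin d → ℝ) j y)|
        = ENNReal.ofReal (a (y - t)) * ENNReal.ofReal |g (j.insertNth y r)| := by
    intro t y
    rw [update_insertNth]
    simp
  simp_rw [key]
  have hswap : Measurable fun p : (Fin d → ℝ) × (Fin d → ℝ) =>
      ENNReal.ofReal (a (p.2 - p.1)) * ENNReal.ofReal |g (j.insertNth p.2 r)| :=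
    ((ham.comp (measurable_snd.sub measurable_fst)).ennreal_ofReal).mul
      ((hg.comp ((meas_insertNth_left j r).comp measurable_snd)).abs.ennreal_ofReal)
  rw [lintegral_lintegral_swap hswap.aemeasurable]
  have inner : ∀ y : Fin d → ℝ,
      ∫⁻ t : Fin d → ℝ, ENNReal.ofReal (a (y - t)) * ENNReal.ofReal |g (j.insertNth y r)|
        = ENNReal.ofReal |g (j.insertNth y r)| := by
    intro y
    have hm1 : Measurable fun t : Fin d → ℝ => ENNReal.ofReal (a (y - t)) :=
      (ham.comp (measurable_const.sub measurable_id)).ennreal_ofReal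
    rw [lintegral_mul_const _ hm1, kernelInt a h0 ham hai han y, one_mul]
  simp_rw [inner]

private lemma term_L3 {n : ℕ} (a : (Fin d → ℝ) → ℝ) (ham : Measurable a)
    (g : (Fin (n+1) → Fin d → ℝ) → ℝ) (hg : Measurable g) (j : Fin n) :
    ∫⁻ x : Fin n → Fin d → ℝ, ∫⁻ y : Fin d → ℝ,
        ENNReal.ofReal (a (y - x j)) * ENNReal.ofReal |g (Fin.snoc x y)|
      = ∫⁻ z : Fin (n+1) → Fin d → ℝ,
          ENNReal.ofReal (a (z (Fin.last n) - z j.castSucc)) * ENNReal.ofReal |g z| := by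
  have hmeasz : Measurable fun z : Fin (n+1) → Fin d → ℝ =>
      ENNReal.ofReal (a (z (Fin.last n) - z j.castSucc)) * ENNReal.ofReal |g z| :=
    meas_kernel a ham g hg _ _
  rw [lintegral_split (Fin.last n) _ hmeasz]
  refine lintegral_congr fun r => lintegral_congr fun t => ?_
  have h1 : ((Fin.last n).insertNth t r : Fin (n+1) → Fin d → ℝ) = Fin.snoc r t := by
    simp [Fin.insertNth_last]
  rw [h1, Fin.snoc_last, Fin.snoc_castSucc]

private lemma ofReal_abs_integral_le {α : Type*} [MeasurableSpace α] (μ : Measure α)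
    (f : α → ℝ) :
    ENNReal.ofReal |∫ y, f y ∂μ| ≤ ∫⁻ y, ENNReal.ofReal |f y| ∂μ := by
  by_cases hi : Integrable f μ
  · calc ENNReal.ofReal |∫ y, f y ∂μ| ≤ ENNReal.ofReal (∫ y, |f y| ∂μ) := by
          refine ENNReal.ofReal_le_ofReal ?_
          simpa [Real.norm_eq_abs] using norm_integral_le_integral_norm f (μ := μ)
    _ = ∫⁻ y, ENNReal.ofReal |f y| ∂μ :=
          ofReal_integral_eq_lintegral_ofReal hi.abs
            (Filter.Eventually.of_forall fun y => abs_nonneg _)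
  · rw [integral_undef hi]
    simp

private lemma double_count {n : ℕ} (c : ℝ≥0∞) :
    ∑ i : Fin n, ∑ j : Fin n, (if i ≠ j then c else 0)
      = (n : ℝ≥0∞) * ((n - 1 : ℕ) : ℝ≥0∞) * c := by
  have hrow : ∀ i : Fin n, ∑ j : Fin n, (if i ≠ j then c else 0)
      = ((n - 1 : ℕ) : ℝ≥0∞) * c := by
    intro i
    rw [Finset.sum_ite, Finset.sum_const, Finset.sum_const_zero, add_zero]
    have : (Finset.univ.filter fun j : Fin n => i ≠ j) = Finset.univ.erase i :=
      Finset.filter_ne Finset.univ i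
    rw [this, Finset.card_erase_of_mem (Finset.mem_univ i)]
    simp [nsmul_eq_mul, Finset.card_univ]
  simp_rw [hrow]
  rw [Finset.sum_const, nsmul_eq_mul, Finset.card_univ, ← mul_assoc]
  simp

private lemma double_count' {n : ℕ} (c : ℝ≥0∞) :
    ∑ j : Fin n, ∑ i : Fin n, (if i ≠ j then c else 0)
      = (n : ℝ≥0∞) * ((n - 1 : ℕ) : ℝ≥0∞) * c := by
  have hrow : ∀ j : Fin n, ∑ i : Fin n, (if i ≠ j then c else 0)
      = ((n - 1 : ℕ) : ℝ≥0∞) * c := by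
    intro j
    rw [Finset.sum_ite, Finset.sum_const, Finset.sum_const_zero, add_zero]
    have : (Finset.univ.filter fun i : Fin n => i ≠ j) = Finset.univ.erase j :=
      Finset.filter_ne' Finset.univ j
    rw [this, Finset.card_erase_of_mem (Finset.mem_univ j)]
    simp [nsmul_eq_mul, Finset.card_univ]
  simp_rw [hrow]
  rw [Finset.sum_const, nsmul_eq_mul, Finset.card_univ, ← mul_assoc]
  simp

private lemma scalar_step {p q s t : ℝ} (hp : 0 ≤ p) (hs : 0 ≤ s)
    (h : p * q = s * t) (u v : ℝ≥0∞) (huv : ENNReal.ofReal t * u ≤ v) :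
    ENNReal.ofReal p * (ENNReal.ofReal q * u) ≤ ENNReal.ofReal s * v := by
  rw [← mul_assoc, ← ENNReal.ofReal_mul hp, h, ENNReal.ofReal_mul hs, mul_assoc]
  exact mul_le_mul_right huv _

end Aux

/-- The key relative bound in the proof of Theorem 4.6: if `Cκ⁻a⁻ ≥ 2κ⁺a⁺` and
`m > 2(κ⁻C + κ⁺)`, then `‖(L₁+L₂+L₃)G‖_C ≤ a‖L₀G‖_C` with
`a = κ⁻C/m + κ⁺/m + 1/2 < 1`. -/
theorem stmt9 (d : ℕ) (hd : 1 ≤ d)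
    (aminus aplus : (Fin d → ℝ) → ℝ)
    (ham_nonneg : ∀ x, 0 ≤ aminus x) (ham_even : ∀ x, aminus (-x) = aminus x)
    (ham_meas : Measurable aminus) (ham_int : Integrable aminus)
    (ham_norm : ∫ x, aminus x = 1)
    (hap_nonneg : ∀ x, 0 ≤ aplus x) (hap_even : ∀ x, aplus (-x) = aplus x)
    (hap_meas : Measurable aplus) (hap_int : Integrable aplus)
    (hap_norm : ∫ x, aplus x = 1)
    (m κm κp C : ℝ) (hm : 0 < m) (hκm : 0 < κm) (hκp : 0 < κp) (hC : 0 < C)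
    (hker : ∀ x : Fin d → ℝ, 2 * κp * aplus x ≤ C * κm * aminus x)
    (hmbig : 2 * (κm * C + κp) < m)
    (G : (n : ℕ) → (Fin n → (Fin d → ℝ)) → ℝ) (hGmeas : ∀ n, Measurable (G n))
    (hGsymm : IsSymmSeq d G)
    (hG : normLC d C (L0 d m κm aminus G) < ⊤) :
    normLC d C (fun n x =>
        L1 d κm aminus G n x + L2 d κp aplus G n x + L3 d κp aplus G n x)
        ≤ ENNReal.ofReal (κm * C / m + κp / m + 1 / 2) *
          normLC d C (L0 d m κm aminus G) ∧
      κm * C / m + κp / m + 1 / 2 < 1 := by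

  classical
  have hm0 : (m : ℝ) ≠ 0 := ne_of_gt hm
  have haux : κm * C / m + κp / m + 1 / 2 < 1 := by
    have h2 : (κm * C + κp) / m < 1 / 2 := by
      rw [div_lt_iff₀ hm]; nlinarith
    have h3 : κm * C / m + κp / m = (κm * C + κp) / m := by ring
    linarith
  refine ⟨?_, haux⟩
  have hE_nonneg : ∀ (n : ℕ) (x : Fin n → Fin d → ℝ), 0 ≤ pairEnergy d aminus n x := by
    intro n x
    refine Finset.sum_nonneg fun i _ => Finset.sum_nonneg fun j _ => ?_
    split_ifs
    · exact ham_nonneg _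
    · exact le_rfl
  have hL0abs : ∀ (n : ℕ) (x : Fin n → Fin d → ℝ),
      ENNReal.ofReal |L0 d m κm aminus G n x|
        = ENNReal.ofReal (m * (n : ℝ) + κm * pairEnergy d aminus n x) * ENNReal.ofReal |G n x| := by
    intro n x
    have hc0 : 0 ≤ m * (n : ℝ) + κm * pairEnergy d aminus n x := by
      have h1 := hE_nonneg n x
      have h2 : 0 ≤ m * (n : ℝ) := by positivity
      nlinarith
    show ENNReal.ofReal |(-(m * (n : ℝ) + κm * pairEnergy d aminus n x)) * G n x| = _
    rw [abs_mul, abs_neg, abs_of_nonneg hc0, ENNReal.ofReal_mul hc0]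
  have hJ1 : ∀ n : ℕ, ENNReal.ofReal (m * (n : ℝ)) * (∫⁻ x : Fin (n) → Fin d → ℝ, ENNReal.ofReal |G (n) x|) ≤ (∫⁻ x : Fin (n) → Fin d → ℝ, ENNReal.ofReal |L0 d m κm aminus G (n) x|) := by
    intro n
    rw [← lintegral_const_mul' _ _ ENNReal.ofReal_ne_top]
    refine lintegral_mono fun x => ?_
    rw [hL0abs n x]
    exact mul_le_mul_left (ENNReal.ofReal_le_ofReal
      (le_add_of_nonneg_right (mul_nonneg hκm.le (hE_nonneg n x)))) _
  have hmKer : ∀ (n : ℕ) (i j : Fin n), Measurable fun z : Fin n → Fin d → ℝ =>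
      ENNReal.ofReal (aminus (z i - z j)) * ENNReal.ofReal |G n z| :=
    fun n i j => meas_kernel aminus ham_meas (G n) (hGmeas n) i j
  have hJq : ∀ (n : ℕ) (i j : Fin n), i ≠ j →
      ENNReal.ofReal κm * ((n : ℝ≥0∞) * ((n - 1 : ℕ) : ℝ≥0∞) *
        ∫⁻ z : Fin n → Fin d → ℝ, ENNReal.ofReal (aminus (z i - z j)) * ENNReal.ofReal |G n z|)
      ≤ (∫⁻ x : Fin (n) → Fin d → ℝ, ENNReal.ofReal |L0 d m κm aminus G (n) x|) := by
    intro n i j hij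
    have hite : ∀ (z : Fin n → Fin d → ℝ) (i' j' : Fin n),
        0 ≤ (if i' ≠ j' then aminus (z i' - z j') else 0) := by
      intro z i' j'
      split_ifs
      · exact ham_nonneg _
      · exact le_rfl
    have hmite : ∀ i' j' : Fin n, Measurable fun z : Fin n → Fin d → ℝ =>
        (if i' ≠ j' then ENNReal.ofReal (aminus (z i' - z j')) * ENNReal.ofReal |G n z| else 0) := by
      intro i' j'
      split_ifs
      · exact hmKer n i' j'
      · exact measurable_const
    have hpt : ∀ z : Fin n → Fin d → ℝ,
        ENNReal.ofReal (pairEnergy d aminus n z) * ENNReal.ofReal |G n z|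
          = ∑ i' : Fin n, ∑ j' : Fin n,
              (if i' ≠ j' then ENNReal.ofReal (aminus (z i' - z j')) * ENNReal.ofReal |G n z| else 0) := by
      intro z
      rw [pairEnergy,
        ENNReal.ofReal_sum_of_nonneg (fun i' _ => Finset.sum_nonneg fun j' _ => hite z i' j'),
        Finset.sum_mul]
      refine Finset.sum_congr rfl fun i' _ => ?_
      rw [ENNReal.ofReal_sum_of_nonneg (fun j' _ => hite z i' j'), Finset.sum_mul]
      refine Finset.sum_congr rfl fun j' _ => ?_
      split_ifs with h
      · rfl
      · simp
    have hP : (∫⁻ z : Fin n → Fin d → ℝ,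
        ENNReal.ofReal (pairEnergy d aminus n z) * ENNReal.ofReal |G n z|)
        = (n : ℝ≥0∞) * ((n - 1 : ℕ) : ℝ≥0∞) *
          ∫⁻ z : Fin n → Fin d → ℝ, ENNReal.ofReal (aminus (z i - z j)) * ENNReal.ofReal |G n z| := by
      rw [lintegral_congr hpt,
        lintegral_finset_sum _ (fun i' _ => Finset.measurable_sum _ (fun j' _ => hmite i' j'))]
      have hinner : ∀ i' : Fin n,
          (∫⁻ z : Fin n → Fin d → ℝ, ∑ j' : Fin n,
            (if i' ≠ j' then ENNReal.ofReal (aminus (z i' - z j')) * ENNReal.ofReal |G n z| else 0))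
          = ∑ j' : Fin n, (if i' ≠ j' then
              (∫⁻ z : Fin n → Fin d → ℝ, ENNReal.ofReal (aminus (z i - z j)) * ENNReal.ofReal |G n z|)
              else 0) := by
        intro i'
        rw [lintegral_finset_sum _ (fun j' _ => hmite i' j')]
        refine Finset.sum_congr rfl fun j' _ => ?_
        by_cases h : i' ≠ j'
        · simp only [if_pos h]
          exact pair_exchange aminus ham_meas (G n) (hGmeas n) (hGsymm n) h hij
        · simp only [if_neg h]
          exact lintegral_zero
      simp_rw [hinner]
      rw [double_count]
    calc ENNReal.ofReal κm * ((n : ℝ≥0∞) * ((n - 1 : ℕ) : ℝ≥0∞) *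
          ∫⁻ z : Fin n → Fin d → ℝ, ENNReal.ofReal (aminus (z i - z j)) * ENNReal.ofReal |G n z|)
        = ENNReal.ofReal κm * ∫⁻ z : Fin n → Fin d → ℝ,
            ENNReal.ofReal (pairEnergy d aminus n z) * ENNReal.ofReal |G n z| := by rw [hP]
      _ = ∫⁻ z : Fin n → Fin d → ℝ, ENNReal.ofReal κm *
            (ENNReal.ofReal (pairEnergy d aminus n z) * ENNReal.ofReal |G n z|) :=
          (lintegral_const_mul' _ _ ENNReal.ofReal_ne_top).symm
      _ ≤ (∫⁻ x : Fin (n) → Fin d → ℝ, ENNReal.ofReal |L0 d m κm aminus G (n) x|) := by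
          refine lintegral_mono fun z => ?_
          rw [hL0abs n z, ← mul_assoc, ← ENNReal.ofReal_mul hκm.le]
          refine mul_le_mul_left (ENNReal.ofReal_le_ofReal ?_) _
          have : 0 ≤ m * (n : ℝ) := by positivity
          linarith

  have hlev2 : ∀ n : ℕ, ENNReal.ofReal (C ^ (n) / (Nat.factorial (n) : ℝ)) *
      (∫⁻ x : Fin n → Fin d → ℝ, ENNReal.ofReal |L2 d κp aplus G n x|)
      ≤ ENNReal.ofReal (κp / m) * (ENNReal.ofReal (C ^ (n) / (Nat.factorial (n) : ℝ)) * (∫⁻ x : Fin (n) → Fin d → ℝ, ENNReal.ofReal |L0 d m κm aminus G (n) x|)) := by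
    intro n
    match n with
    | 0 =>
      have h0 : ∀ x : Fin 0 → Fin d → ℝ, L2 d κp aplus G 0 x = 0 := by
        intro x
        show κp * ∑ j : Fin 0, _ = 0
        simp
      simp [h0]
    | (k+1) =>
      have hptY : ∀ x : Fin (k+1) → Fin d → ℝ,
          ENNReal.ofReal |L2 d κp aplus G (k+1) x| ≤
          ENNReal.ofReal κp * ∑ j : Fin (k+1), ∫⁻ y : Fin d → ℝ,
            ENNReal.ofReal (aplus (y - x j)) * ENNReal.ofReal |G (k+1) (Function.update x j y)| := by
        intro x
        show ENNReal.ofReal |κp * ∑ j : Fin (k+1), ∫ y : Fin d → ℝ,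
          aplus (y - x j) * G (k+1) (Function.update x j y)| ≤ _
        rw [abs_mul, abs_of_nonneg hκp.le, ENNReal.ofReal_mul hκp.le]
        refine mul_le_mul_right ?_ _
        refine le_trans (ENNReal.ofReal_le_ofReal (Finset.abs_sum_le_sum_abs _ _)) ?_
        rw [ENNReal.ofReal_sum_of_nonneg (fun j _ => abs_nonneg _)]
        refine Finset.sum_le_sum fun j _ => ?_
        refine le_trans (ofReal_abs_integral_le volume _) (le_of_eq (lintegral_congr fun y => ?_))
        rw [abs_mul, abs_of_nonneg (hap_nonneg _), ENNReal.ofReal_mul (hap_nonneg _)]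
      have hB2m : ∀ j : Fin (k+1), Measurable fun x : Fin (k+1) → Fin d → ℝ =>
          ∫⁻ y : Fin d → ℝ, ENNReal.ofReal (aplus (y - x j)) * ENNReal.ofReal |G (k+1) (Function.update x j y)| := by
        intro j
        have hF : Measurable fun p : (Fin (k+1) → Fin d → ℝ) × (Fin d → ℝ) =>
            ENNReal.ofReal (aplus (p.2 - p.1 j)) * ENNReal.ofReal |G (k+1) (Function.update p.1 j p.2)| :=
          ((hap_meas.comp (measurable_snd.sub ((measurable_pi_apply j).comp
            measurable_fst))).ennreal_ofReal).mul
            (((hGmeas (k+1)).comp (meas_update j)).abs.ennreal_ofReal)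
        exact hF.lintegral_prod_right'
      have hY : (∫⁻ x : Fin (k+1) → Fin d → ℝ, ENNReal.ofReal |L2 d κp aplus G (k+1) x|)
          ≤ ENNReal.ofReal (κp * ((k+1 : ℕ) : ℝ)) * (∫⁻ x : Fin (k+1) → Fin d → ℝ, ENNReal.ofReal |G (k+1) x|) := by
        calc (∫⁻ x : Fin (k+1) → Fin d → ℝ, ENNReal.ofReal |L2 d κp aplus G (k+1) x|)
            ≤ ∫⁻ x : Fin (k+1) → Fin d → ℝ, ENNReal.ofReal κp * ∑ j : Fin (k+1),
                ∫⁻ y : Fin d → ℝ, ENNReal.ofReal (aplus (y - x j)) *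
                  ENNReal.ofReal |G (k+1) (Function.update x j y)| := lintegral_mono hptY
          _ = ENNReal.ofReal κp * ∑ j : Fin (k+1), ∫⁻ x : Fin (k+1) → Fin d → ℝ,
                ∫⁻ y : Fin d → ℝ, ENNReal.ofReal (aplus (y - x j)) *
                  ENNReal.ofReal |G (k+1) (Function.update x j y)| := by
              rw [lintegral_const_mul' _ _ ENNReal.ofReal_ne_top,
                lintegral_finset_sum _ (fun j _ => hB2m j)]
          _ = ENNReal.ofReal κp * ∑ _j : Fin (k+1), (∫⁻ x : Fin (k+1) → Fin d → ℝ, ENNReal.ofReal |G (k+1) x|) := by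
              congr 1
              refine Finset.sum_congr rfl fun j _ => ?_
              exact term_L2 aplus hap_nonneg hap_meas hap_int hap_norm (G (k+1)) (hGmeas (k+1)) j
          _ = ENNReal.ofReal (κp * ((k+1 : ℕ) : ℝ)) * (∫⁻ x : Fin (k+1) → Fin d → ℝ, ENNReal.ofReal |G (k+1) x|) := by
              rw [Finset.sum_const, Finset.card_univ, Fintype.card_fin, nsmul_eq_mul,
                ← ENNReal.ofReal_natCast (k+1), ← mul_assoc, ← ENNReal.ofReal_mul hκp.le]
      calc ENNReal.ofReal (C ^ (k+1) / (Nat.factorial (k+1) : ℝ)) * (∫⁻ x : Fin (k+1) → Fin d → ℝ, ENNReal.ofReal |L2 d κp aplus G (k+1) x|)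
          ≤ ENNReal.ofReal (C ^ (k+1) / (Nat.factorial (k+1) : ℝ)) * (ENNReal.ofReal (κp * ((k+1 : ℕ) : ℝ)) * (∫⁻ x : Fin (k+1) → Fin d → ℝ, ENNReal.ofReal |G (k+1) x|)) :=
            mul_le_mul_right hY _
        _ ≤ ENNReal.ofReal (κp / m) * (ENNReal.ofReal (C ^ (k+1) / (Nat.factorial (k+1) : ℝ)) * (∫⁻ x : Fin (k+1) → Fin d → ℝ, ENNReal.ofReal |L0 d m κm aminus G (k+1) x|)) := by
            have hF : (Nat.factorial (k+1) : ℝ) ≠ 0 := by positivity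
            refine scalar_step (by positivity) (by positivity)
              (t := (C ^ (k+1) / (Nat.factorial (k+1) : ℝ)) * (m * ((k+1 : ℕ) : ℝ))) ?_ _ _ ?_
            · field_simp
            · rw [ENNReal.ofReal_mul (by positivity), mul_assoc]
              exact mul_le_mul_right (hJ1 (k+1)) _

  have hlev3 : ∀ n : ℕ, ENNReal.ofReal (C ^ (n) / (Nat.factorial (n) : ℝ)) *
      (∫⁻ x : Fin n → Fin d → ℝ, ENNReal.ofReal |L3 d κp aplus G n x|)
      ≤ ENNReal.ofReal (1 / 2) * (ENNReal.ofReal (C ^ (n+1) / (Nat.factorial (n+1) : ℝ)) * (∫⁻ x : Fin (n+1) → Fin d → ℝ, ENNReal.ofReal |L0 d m κm aminus G (n+1) x|)) := by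
    intro n
    match n with
    | 0 =>
      have h0 : ∀ x : Fin 0 → Fin d → ℝ, L3 d κp aplus G 0 x = 0 := by
        intro x
        show κp * ∑ j : Fin 0, _ = 0
        simp
      simp [h0]
    | (k+1) =>
      have hptZ : ∀ x : Fin (k+1) → Fin d → ℝ,
          ENNReal.ofReal |L3 d κp aplus G (k+1) x| ≤
          ENNReal.ofReal κp * ∑ j : Fin (k+1), ∫⁻ y : Fin d → ℝ,
            ENNReal.ofReal (aplus (y - x j)) * ENNReal.ofReal |G (k+2) (Fin.snoc x y)| := by
        intro x
        show ENNReal.ofReal |κp * ∑ j : Fin (k+1), ∫ y : Fin d → ℝ,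
          aplus (y - x j) * G (k+2) (Fin.snoc x y)| ≤ _
        rw [abs_mul, abs_of_nonneg hκp.le, ENNReal.ofReal_mul hκp.le]
        refine mul_le_mul_right ?_ _
        refine le_trans (ENNReal.ofReal_le_ofReal (Finset.abs_sum_le_sum_abs _ _)) ?_
        rw [ENNReal.ofReal_sum_of_nonneg (fun j _ => abs_nonneg _)]
        refine Finset.sum_le_sum fun j _ => ?_
        refine le_trans (ofReal_abs_integral_le volume _) (le_of_eq (lintegral_congr fun y => ?_))
        rw [abs_mul, abs_of_nonneg (hap_nonneg _), ENNReal.ofReal_mul (hap_nonneg _)]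
      have hB3m : ∀ j : Fin (k+1), Measurable fun x : Fin (k+1) → Fin d → ℝ =>
          ∫⁻ y : Fin d → ℝ, ENNReal.ofReal (aplus (y - x j)) * ENNReal.ofReal |G (k+2) (Fin.snoc x y)| := by
        intro j
        have hF : Measurable fun p : (Fin (k+1) → Fin d → ℝ) × (Fin d → ℝ) =>
            ENNReal.ofReal (aplus (p.2 - p.1 j)) * ENNReal.ofReal |G (k+2) (Fin.snoc p.1 p.2)| :=
          ((hap_meas.comp (measurable_snd.sub ((measurable_pi_apply j).comp
            measurable_fst))).ennreal_ofReal).mul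
            (((hGmeas (k+2)).comp meas_snoc).abs.ennreal_ofReal)
        exact hF.lintegral_prod_right'
      have hne : ∀ j : Fin (k+1), Fin.last (k+1) ≠ Fin.castSucc j :=
        fun j => (Fin.castSucc_lt_last j).ne'
      have hS0 : ∀ j : Fin (k+1),
          (∫⁻ z : Fin (k+2) → Fin d → ℝ, ENNReal.ofReal (aminus (z (Fin.last (k+1)) - z j.castSucc)) *
            ENNReal.ofReal |G (k+2) z|)
          = ∫⁻ z : Fin (k+2) → Fin d → ℝ, ENNReal.ofReal (aminus (z (Fin.last (k+1)) - z ((0 : Fin (k+1)).castSucc))) *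
            ENNReal.ofReal |G (k+2) z| := by
        intro j
        exact pair_exchange aminus ham_meas (G (k+2)) (hGmeas (k+2)) (hGsymm (k+2)) (hne j) (hne 0)
      have hZ : (∫⁻ x : Fin (k+1) → Fin d → ℝ, ENNReal.ofReal |L3 d κp aplus G (k+1) x|)
          ≤ ENNReal.ofReal ((C * κm / 2) * ((k+1 : ℕ) : ℝ)) *
            (∫⁻ z : Fin (k+2) → Fin d → ℝ, ENNReal.ofReal (aminus (z (Fin.last (k+1)) - z ((0 : Fin (k+1)).castSucc))) *
              ENNReal.ofReal |G (k+2) z|) := by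
        calc (∫⁻ x : Fin (k+1) → Fin d → ℝ, ENNReal.ofReal |L3 d κp aplus G (k+1) x|)
            ≤ ∫⁻ x : Fin (k+1) → Fin d → ℝ, ENNReal.ofReal κp * ∑ j : Fin (k+1),
                ∫⁻ y : Fin d → ℝ, ENNReal.ofReal (aplus (y - x j)) *
                  ENNReal.ofReal |G (k+2) (Fin.snoc x y)| := lintegral_mono hptZ
          _ = ∑ j : Fin (k+1), ENNReal.ofReal κp * ∫⁻ x : Fin (k+1) → Fin d → ℝ,
                ∫⁻ y : Fin d → ℝ, ENNReal.ofReal (aplus (y - x j)) *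
                  ENNReal.ofReal |G (k+2) (Fin.snoc x y)| := by
              rw [lintegral_const_mul' _ _ ENNReal.ofReal_ne_top,
                lintegral_finset_sum _ (fun j _ => hB3m j), Finset.mul_sum]
          _ ≤ ∑ j : Fin (k+1), ENNReal.ofReal (C * κm / 2) * ∫⁻ x : Fin (k+1) → Fin d → ℝ,
                ∫⁻ y : Fin d → ℝ, ENNReal.ofReal (aminus (y - x j)) *
                  ENNReal.ofReal |G (k+2) (Fin.snoc x y)| := by
              refine Finset.sum_le_sum fun j _ => ?_
              rw [← lintegral_const_mul' _ _ ENNReal.ofReal_ne_top,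
                ← lintegral_const_mul' _ _ ENNReal.ofReal_ne_top]
              refine lintegral_mono fun x => ?_
              rw [← lintegral_const_mul' _ _ ENNReal.ofReal_ne_top,
                ← lintegral_const_mul' _ _ ENNReal.ofReal_ne_top]
              refine lintegral_mono fun y => ?_
              have hCκ : (0:ℝ) ≤ C * κm / 2 := by positivity
              have hcomb : ENNReal.ofReal κp * (ENNReal.ofReal (aplus (y - x j)) *
                  ENNReal.ofReal |G (k+2) (Fin.snoc x y)|)
                  = ENNReal.ofReal (κp * aplus (y - x j)) *
                    ENNReal.ofReal |G (k+2) (Fin.snoc x y)| := by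
                rw [← mul_assoc, ← ENNReal.ofReal_mul hκp.le]
              have hcomb2 : ENNReal.ofReal (C * κm / 2) * (ENNReal.ofReal (aminus (y - x j)) *
                  ENNReal.ofReal |G (k+2) (Fin.snoc x y)|)
                  = ENNReal.ofReal ((C * κm / 2) * aminus (y - x j)) *
                    ENNReal.ofReal |G (k+2) (Fin.snoc x y)| := by
                rw [← mul_assoc, ← ENNReal.ofReal_mul hCκ]
              rw [hcomb, hcomb2]
              refine mul_le_mul_left (ENNReal.ofReal_le_ofReal ?_) _
              have := hker (y - x j)
              linarith
          _ = ∑ _j : Fin (k+1), ENNReal.ofReal (C * κm / 2) *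
                (∫⁻ z : Fin (k+2) → Fin d → ℝ, ENNReal.ofReal (aminus (z (Fin.last (k+1)) - z ((0 : Fin (k+1)).castSucc))) *
                  ENNReal.ofReal |G (k+2) z|) := by
              refine Finset.sum_congr rfl fun j _ => ?_
              rw [term_L3 aminus ham_meas (G (k+2)) (hGmeas (k+2)) j, hS0 j]
          _ = ENNReal.ofReal ((C * κm / 2) * ((k+1 : ℕ) : ℝ)) * _ := by
              rw [Finset.sum_const, Finset.card_univ, Fintype.card_fin, nsmul_eq_mul,
                ← mul_assoc, mul_comm ((k+1 : ℕ) : ℝ≥0∞), ← ENNReal.ofReal_natCast (k+1),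
                ← ENNReal.ofReal_mul (by positivity)]
      calc ENNReal.ofReal (C ^ (k+1) / (Nat.factorial (k+1) : ℝ)) * (∫⁻ x : Fin (k+1) → Fin d → ℝ, ENNReal.ofReal |L3 d κp aplus G (k+1) x|)
          ≤ ENNReal.ofReal (C ^ (k+1) / (Nat.factorial (k+1) : ℝ)) * (ENNReal.ofReal ((C * κm / 2) * ((k+1 : ℕ) : ℝ)) *
              (∫⁻ z : Fin (k+2) → Fin d → ℝ, ENNReal.ofReal (aminus (z (Fin.last (k+1)) - z ((0 : Fin (k+1)).castSucc))) *
                ENNReal.ofReal |G (k+2) z|)) := mul_le_mul_right hZ _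
        _ ≤ ENNReal.ofReal (1 / 2) * (ENNReal.ofReal (C ^ (k+2) / (Nat.factorial (k+2) : ℝ)) * (∫⁻ x : Fin (k+2) → Fin d → ℝ, ENNReal.ofReal |L0 d m κm aminus G (k+2) x|)) := by
            have hF : (Nat.factorial (k+1) : ℝ) ≠ 0 := by positivity
            have hfac : (Nat.factorial (k+2) : ℝ) = ((k+2 : ℕ) : ℝ) * (Nat.factorial (k+1) : ℝ) := by
              push_cast [Nat.factorial_succ]
              ring
            refine scalar_step (by positivity) (by positivity)
              (t := (C ^ (k+2) / (Nat.factorial (k+2) : ℝ)) * (κm * (((k+2 : ℕ) : ℝ) * ((k+1 : ℕ) : ℝ)))) ?_ _ _ ?_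
            · rw [hfac]
              field_simp
              ring
            · rw [ENNReal.ofReal_mul (by positivity), mul_assoc]
              refine mul_le_mul_right ?_ _
              have hq := hJq (k+2) (Fin.last (k+1)) ((0 : Fin (k+1)).castSucc) (hne 0)
              have hcast : ((k + 2 - 1 : ℕ) : ℝ≥0∞) = ((k+1 : ℕ) : ℝ≥0∞) := rfl
              rw [hcast] at hq
              refine le_trans (le_of_eq ?_) hq
              rw [ENNReal.ofReal_mul hκm.le, ENNReal.ofReal_mul (by positivity),
                ENNReal.ofReal_natCast, ENNReal.ofReal_natCast, mul_assoc]

  have hlev1 : ∀ k : ℕ, ENNReal.ofReal (C ^ (k+2) / (Nat.factorial (k+2) : ℝ)) *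
      (∫⁻ x : Fin (k+2) → Fin d → ℝ, ENNReal.ofReal |L1 d κm aminus G (k+2) x|)
      ≤ ENNReal.ofReal (κm * C / m) * (ENNReal.ofReal (C ^ (k+1) / (Nat.factorial (k+1) : ℝ)) * (∫⁻ x : Fin (k+1) → Fin d → ℝ, ENNReal.ofReal |L0 d m κm aminus G (k+1) x|)) := by
    intro k
    have hcomp : ∀ j : Fin (k+2), Measurable fun x : Fin (k+2) → Fin d → ℝ => x ∘ j.succAbove := by
      intro j
      rw [measurable_pi_iff]
      exact fun i => measurable_pi_apply _
    have hterm_m : ∀ i j : Fin (k+2), Measurable fun x : Fin (k+2) → Fin d → ℝ =>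
        ENNReal.ofReal (aminus (x i - x j)) * ENNReal.ofReal |G (k+1) (x ∘ j.succAbove)| :=
      fun i j => ((ham_meas.comp ((measurable_pi_apply i).sub (measurable_pi_apply j))).ennreal_ofReal).mul
        (((hGmeas (k+1)).comp (hcomp j)).abs.ennreal_ofReal)
    have hite_m : ∀ j i : Fin (k+2), Measurable fun x : Fin (k+2) → Fin d → ℝ =>
        (if i ≠ j then ENNReal.ofReal (aminus (x i - x j)) * ENNReal.ofReal |G (k+1) (x ∘ j.succAbove)| else 0) := by
      intro j i
      split_ifs
      · exact hterm_m i j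
      · exact measurable_const
    have hptX : ∀ x : Fin (k+2) → Fin d → ℝ, ENNReal.ofReal |L1 d κm aminus G (k+2) x| ≤
        ENNReal.ofReal κm * ∑ j : Fin (k+2), ∑ i : Fin (k+2),
          (if i ≠ j then ENNReal.ofReal (aminus (x i - x j)) * ENNReal.ofReal |G (k+1) (x ∘ j.succAbove)| else 0) := by
      intro x
      show ENNReal.ofReal |κm * ∑ j : Fin (k+2), ∑ i : Fin (k+2),
        (if i ≠ j then aminus (x i - x j) * G (k+1) (x ∘ j.succAbove) else 0)| ≤ _
      rw [abs_mul, abs_of_nonneg hκm.le, ENNReal.ofReal_mul hκm.le]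
      refine mul_le_mul_right ?_ _
      refine le_trans (ENNReal.ofReal_le_ofReal (Finset.abs_sum_le_sum_abs _ _)) ?_
      rw [ENNReal.ofReal_sum_of_nonneg (fun j _ => abs_nonneg _)]
      refine Finset.sum_le_sum fun j _ => ?_
      refine le_trans (ENNReal.ofReal_le_ofReal (Finset.abs_sum_le_sum_abs _ _)) ?_
      rw [ENNReal.ofReal_sum_of_nonneg (fun i _ => abs_nonneg _)]
      refine Finset.sum_le_sum fun i _ => ?_
      by_cases h : i ≠ j
      · rw [if_pos h, if_pos h, abs_mul, abs_of_nonneg (ham_nonneg _),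
          ENNReal.ofReal_mul (ham_nonneg _)]
      · rw [if_neg h, if_neg h]
        simp
    have hX : (∫⁻ x : Fin (k+2) → Fin d → ℝ, ENNReal.ofReal |L1 d κm aminus G (k+2) x|)
        ≤ ENNReal.ofReal (κm * (((k+2 : ℕ) : ℝ) * ((k+1 : ℕ) : ℝ))) * (∫⁻ x : Fin (k+1) → Fin d → ℝ, ENNReal.ofReal |G (k+1) x|) := by
      calc (∫⁻ x : Fin (k+2) → Fin d → ℝ, ENNReal.ofReal |L1 d κm aminus G (k+2) x|)
          ≤ ∫⁻ x : Fin (k+2) → Fin d → ℝ, ENNReal.ofReal κm * ∑ j : Fin (k+2), ∑ i : Fin (k+2),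
              (if i ≠ j then ENNReal.ofReal (aminus (x i - x j)) * ENNReal.ofReal |G (k+1) (x ∘ j.succAbove)| else 0) :=
            lintegral_mono hptX
        _ = ENNReal.ofReal κm * ∑ j : Fin (k+2), ∑ i : Fin (k+2),
              (if i ≠ j then (∫⁻ x : Fin (k+1) → Fin d → ℝ, ENNReal.ofReal |G (k+1) x|) else 0) := by
            rw [lintegral_const_mul' _ _ ENNReal.ofReal_ne_top,
              lintegral_finset_sum _ (fun j _ => Finset.measurable_sum _ fun i _ => hite_m j i)]
            congr 1
            refine Finset.sum_congr rfl fun j _ => ?_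
            rw [lintegral_finset_sum _ (fun i _ => hite_m j i)]
            refine Finset.sum_congr rfl fun i _ => ?_
            by_cases h : i ≠ j
            · simp only [if_pos h]
              exact term_L1 aminus ham_nonneg ham_meas ham_int ham_norm (G (k+1)) (hGmeas (k+1)) h
            · simp only [if_neg h]
              exact lintegral_zero
        _ = ENNReal.ofReal (κm * (((k+2 : ℕ) : ℝ) * ((k+1 : ℕ) : ℝ))) * (∫⁻ x : Fin (k+1) → Fin d → ℝ, ENNReal.ofReal |G (k+1) x|) := by
            rw [double_count']
            have hcast : ((k + 2 - 1 : ℕ) : ℝ≥0∞) = ((k+1 : ℕ) : ℝ≥0∞) := rfl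
            rw [hcast, mul_assoc, ← ENNReal.ofReal_natCast (k+2), ← ENNReal.ofReal_natCast (k+1),
              ENNReal.ofReal_mul hκm.le, ENNReal.ofReal_mul (Nat.cast_nonneg (k+2))]
            ring
    calc ENNReal.ofReal (C ^ (k+2) / (Nat.factorial (k+2) : ℝ)) * (∫⁻ x : Fin (k+2) → Fin d → ℝ, ENNReal.ofReal |L1 d κm aminus G (k+2) x|)
        ≤ ENNReal.ofReal (C ^ (k+2) / (Nat.factorial (k+2) : ℝ)) * (ENNReal.ofReal (κm * (((k+2 : ℕ) : ℝ) * ((k+1 : ℕ) : ℝ))) * (∫⁻ x : Fin (k+1) → Fin d → ℝ, ENNReal.ofReal |G (k+1) x|)) :=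
          mul_le_mul_right hX _
      _ ≤ ENNReal.ofReal (κm * C / m) * (ENNReal.ofReal (C ^ (k+1) / (Nat.factorial (k+1) : ℝ)) * (∫⁻ x : Fin (k+1) → Fin d → ℝ, ENNReal.ofReal |L0 d m κm aminus G (k+1) x|)) := by
          have hF : (Nat.factorial (k+1) : ℝ) ≠ 0 := by positivity
          have hfac : (Nat.factorial (k+2) : ℝ) = ((k+2 : ℕ) : ℝ) * (Nat.factorial (k+1) : ℝ) := by
            push_cast [Nat.factorial_succ]
            ring
          refine scalar_step (by positivity) (by positivity)
            (t := (C ^ (k+1) / (Nat.factorial (k+1) : ℝ)) * (m * ((k+1 : ℕ) : ℝ))) ?_ _ _ ?_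
          · rw [hfac]
            field_simp
            ring
          · rw [ENNReal.ofReal_mul (by positivity), mul_assoc]
            exact mul_le_mul_right (hJ1 (k+1)) _

  -- measurability of the three operators
  have hmL1 : ∀ n : ℕ, Measurable (L1 d κm aminus G n) := by
    intro n
    match n with
    | 0 => exact measurable_const
    | 1 => exact measurable_const
    | (k+2) =>
      have hcomp : ∀ j : Fin (k+2), Measurable fun x : Fin (k+2) → Fin d → ℝ => x ∘ j.succAbove := by
        intro j
        rw [measurable_pi_iff]
        exact fun i => measurable_pi_apply _
      refine Measurable.const_mul (Finset.measurable_sum _ fun j _ => Finset.measurable_sum _ fun i _ => ?_) κm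
      split_ifs
      · exact (ham_meas.comp ((measurable_pi_apply i).sub (measurable_pi_apply j))).mul
          ((hGmeas (k+1)).comp (hcomp j))
      · exact measurable_const
  have hmL2 : ∀ n : ℕ, Measurable (L2 d κp aplus G n) := by
    intro n
    refine Measurable.const_mul (Finset.measurable_sum _ fun j _ => ?_) κp
    have hu : Measurable fun p : (Fin n → Fin d → ℝ) × (Fin d → ℝ) =>
        aplus (p.2 - p.1 j) * G n (Function.update p.1 j p.2) :=
      (hap_meas.comp (measurable_snd.sub ((measurable_pi_apply j).comp measurable_fst))).mul
        ((hGmeas n).comp (meas_update j))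
    exact hu.stronglyMeasurable.integral_prod_right'.measurable
  have hmL3 : ∀ n : ℕ, Measurable (L3 d κp aplus G n) := by
    intro n
    refine Measurable.const_mul (Finset.measurable_sum _ fun j _ => ?_) κp
    have hu : Measurable fun p : (Fin n → Fin d → ℝ) × (Fin d → ℝ) =>
        aplus (p.2 - p.1 j) * G (n+1) (Fin.snoc p.1 p.2) :=
      (hap_meas.comp (measurable_snd.sub ((measurable_pi_apply j).comp measurable_fst))).mul
        ((hGmeas (n+1)).comp meas_snoc)
    exact hu.stronglyMeasurable.integral_prod_right'.measurable
  have hsplit : ∀ n : ℕ, (∫⁻ x : Fin (n) → Fin d → ℝ, ENNReal.ofReal |L1 d κm aminus G (n) x + L2 d κp aplus G (n) x + L3 d κp aplus G (n) x|) ≤ ((∫⁻ x : Fin (n) → Fin d → ℝ, ENNReal.ofReal |L1 d κm aminus G (n) x|) + (∫⁻ x : Fin (n) → Fin d → ℝ, ENNReal.ofReal |L2 d κp aplus G (n) x|)) + (∫⁻ x : Fin (n) → Fin d → ℝ, ENNReal.ofReal |L3 d κp aplus G (n) x|) := by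
    intro n
    have hb : ∀ x : Fin n → Fin d → ℝ,
        ENNReal.ofReal |L1 d κm aminus G n x + L2 d κp aplus G n x + L3 d κp aplus G n x|
        ≤ (ENNReal.ofReal |L1 d κm aminus G n x| + ENNReal.ofReal |L2 d κp aplus G n x|)
          + ENNReal.ofReal |L3 d κp aplus G n x| := by
      intro x
      refine le_trans (ENNReal.ofReal_le_ofReal (abs_add_three _ _ _)) ?_
      exact le_trans ENNReal.ofReal_add_le (add_le_add ENNReal.ofReal_add_le le_rfl)
    calc (∫⁻ x : Fin (n) → Fin d → ℝ, ENNReal.ofReal |L1 d κm aminus G (n) x + L2 d κp aplus G (n) x + L3 d κp aplus G (n) x|)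
        ≤ ∫⁻ x : Fin n → Fin d → ℝ,
            ((ENNReal.ofReal |L1 d κm aminus G n x| + ENNReal.ofReal |L2 d κp aplus G n x|)
              + ENNReal.ofReal |L3 d κp aplus G n x|) := lintegral_mono hb
      _ = ((∫⁻ x : Fin (n) → Fin d → ℝ, ENNReal.ofReal |L1 d κm aminus G (n) x|) + (∫⁻ x : Fin (n) → Fin d → ℝ, ENNReal.ofReal |L2 d κp aplus G (n) x|)) + (∫⁻ x : Fin (n) → Fin d → ℝ, ENNReal.ofReal |L3 d κp aplus G (n) x|) := by
          rw [lintegral_add_left (f := fun x => ENNReal.ofReal |L1 d κm aminus G n x| + ENNReal.ofReal |L2 d κp aplus G n x|) (((hmL1 n).abs.ennreal_ofReal).add ((hmL2 n).abs.ennreal_ofReal)),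
            lintegral_add_left ((hmL1 n).abs.ennreal_ofReal)]
  have hX0 : (∫⁻ x : Fin (0) → Fin d → ℝ, ENNReal.ofReal |L1 d κm aminus G (0) x|) = 0 := by
    have h0 : ∀ x : Fin 0 → Fin d → ℝ, L1 d κm aminus G 0 x = 0 := fun _ => rfl
    simp only [h0, abs_zero, ENNReal.ofReal_zero, lintegral_zero]
  have hX1 : (∫⁻ x : Fin (1) → Fin d → ℝ, ENNReal.ofReal |L1 d κm aminus G (1) x|) = 0 := by
    have h0 : ∀ x : Fin 1 → Fin d → ℝ, L1 d κm aminus G 1 x = 0 := fun _ => rfl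
    simp only [h0, abs_zero, ENNReal.ofReal_zero, lintegral_zero]
  have hS1 : (∑' n : ℕ, ENNReal.ofReal (C ^ (n) / (Nat.factorial (n) : ℝ)) * (∫⁻ x : Fin (n) → Fin d → ℝ, ENNReal.ofReal |L1 d κm aminus G (n) x|))
      ≤ ENNReal.ofReal (κm * C / m) * ∑' n : ℕ, ENNReal.ofReal (C ^ (n) / (Nat.factorial (n) : ℝ)) * (∫⁻ x : Fin (n) → Fin d → ℝ, ENNReal.ofReal |L0 d m κm aminus G (n) x|) := by
    have hf_le : ∀ n : ℕ, ENNReal.ofReal (C ^ (n) / (Nat.factorial (n) : ℝ)) * (∫⁻ x : Fin (n) → Fin d → ℝ, ENNReal.ofReal |L1 d κm aminus G (n) x|)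
        ≤ (fun n : ℕ => Nat.casesOn n (0 : ℝ≥0∞)
            (fun k => ENNReal.ofReal (κm * C / m) * (ENNReal.ofReal (C ^ (k) / (Nat.factorial (k) : ℝ)) * (∫⁻ x : Fin (k) → Fin d → ℝ, ENNReal.ofReal |L0 d m κm aminus G (k) x|)))) n := by
      intro n
      match n with
      | 0 => rw [hX0, mul_zero]; exact bot_le
      | 1 => rw [hX1, mul_zero]; exact bot_le
      | (k+2) => exact hlev1 k
    refine le_trans (ENNReal.tsum_le_tsum hf_le) ?_
    rw [tsum_eq_zero_add' ENNReal.summable]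
    refine le_trans (le_of_eq (zero_add _)) ?_
    rw [ENNReal.tsum_mul_left]
  have hS2 : (∑' n : ℕ, ENNReal.ofReal (C ^ (n) / (Nat.factorial (n) : ℝ)) * (∫⁻ x : Fin (n) → Fin d → ℝ, ENNReal.ofReal |L2 d κp aplus G (n) x|))
      ≤ ENNReal.ofReal (κp / m) * ∑' n : ℕ, ENNReal.ofReal (C ^ (n) / (Nat.factorial (n) : ℝ)) * (∫⁻ x : Fin (n) → Fin d → ℝ, ENNReal.ofReal |L0 d m κm aminus G (n) x|) := by
    refine le_trans (ENNReal.tsum_le_tsum hlev2) ?_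
    rw [ENNReal.tsum_mul_left]
  have hS3 : (∑' n : ℕ, ENNReal.ofReal (C ^ (n) / (Nat.factorial (n) : ℝ)) * (∫⁻ x : Fin (n) → Fin d → ℝ, ENNReal.ofReal |L3 d κp aplus G (n) x|))
      ≤ ENNReal.ofReal (1 / 2) * ∑' n : ℕ, ENNReal.ofReal (C ^ (n) / (Nat.factorial (n) : ℝ)) * (∫⁻ x : Fin (n) → Fin d → ℝ, ENNReal.ofReal |L0 d m κm aminus G (n) x|) := by
    refine le_trans (ENNReal.tsum_le_tsum hlev3) ?_
    rw [ENNReal.tsum_mul_left]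
    refine mul_le_mul_right ?_ _
    exact ENNReal.tsum_comp_le_tsum_of_injective (fun a b h => by omega)
      (fun n => ENNReal.ofReal (C ^ (n) / (Nat.factorial (n) : ℝ)) * (∫⁻ x : Fin (n) → Fin d → ℝ, ENNReal.ofReal |L0 d m κm aminus G (n) x|))
  show (∑' n : ℕ, ENNReal.ofReal (C ^ (n) / (Nat.factorial (n) : ℝ)) * (∫⁻ x : Fin (n) → Fin d → ℝ, ENNReal.ofReal |L1 d κm aminus G (n) x + L2 d κp aplus G (n) x + L3 d κp aplus G (n) x|))
      ≤ ENNReal.ofReal (κm * C / m + κp / m + 1 / 2) * ∑' n : ℕ, ENNReal.ofReal (C ^ (n) / (Nat.factorial (n) : ℝ)) * (∫⁻ x : Fin (n) → Fin d → ℝ, ENNReal.ofReal |L0 d m κm aminus G (n) x|)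
  calc (∑' n : ℕ, ENNReal.ofReal (C ^ (n) / (Nat.factorial (n) : ℝ)) * (∫⁻ x : Fin (n) → Fin d → ℝ, ENNReal.ofReal |L1 d κm aminus G (n) x + L2 d κp aplus G (n) x + L3 d κp aplus G (n) x|))
      ≤ ∑' n : ℕ, ((ENNReal.ofReal (C ^ (n) / (Nat.factorial (n) : ℝ)) * (∫⁻ x : Fin (n) → Fin d → ℝ, ENNReal.ofReal |L1 d κm aminus G (n) x|) + ENNReal.ofReal (C ^ (n) / (Nat.factorial (n) : ℝ)) * (∫⁻ x : Fin (n) → Fin d → ℝ, ENNReal.ofReal |L2 d κp aplus G (n) x|)) + ENNReal.ofReal (C ^ (n) / (Nat.factorial (n) : ℝ)) * (∫⁻ x : Fin (n) → Fin d → ℝ, ENNReal.ofReal |L3 d κp aplus G (n) x|)) := by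
        refine ENNReal.tsum_le_tsum fun n => ?_
        refine le_trans (mul_le_mul_right (hsplit n) _) (le_of_eq ?_)
        ring
    _ = ((∑' n : ℕ, ENNReal.ofReal (C ^ (n) / (Nat.factorial (n) : ℝ)) * (∫⁻ x : Fin (n) → Fin d → ℝ, ENNReal.ofReal |L1 d κm aminus G (n) x|)) + (∑' n : ℕ, ENNReal.ofReal (C ^ (n) / (Nat.factorial (n) : ℝ)) * (∫⁻ x : Fin (n) → Fin d → ℝ, ENNReal.ofReal |L2 d κp aplus G (n) x|)))
        + (∑' n : ℕ, ENNReal.ofReal (C ^ (n) / (Nat.factorial (n) : ℝ)) * (∫⁻ x : Fin (n) → Fin d → ℝ, ENNReal.ofReal |L3 d κp aplus G (n) x|)) := by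
        rw [ENNReal.tsum_add, ENNReal.tsum_add]
    _ ≤ ((ENNReal.ofReal (κm * C / m) * ∑' n : ℕ, ENNReal.ofReal (C ^ (n) / (Nat.factorial (n) : ℝ)) * (∫⁻ x : Fin (n) → Fin d → ℝ, ENNReal.ofReal |L0 d m κm aminus G (n) x|))
          + (ENNReal.ofReal (κp / m) * ∑' n : ℕ, ENNReal.ofReal (C ^ (n) / (Nat.factorial (n) : ℝ)) * (∫⁻ x : Fin (n) → Fin d → ℝ, ENNReal.ofReal |L0 d m κm aminus G (n) x|)))
        + (ENNReal.ofReal (1 / 2) * ∑' n : ℕ, ENNReal.ofReal (C ^ (n) / (Nat.factorial (n) : ℝ)) * (∫⁻ x : Fin (n) → Fin d → ℝ, ENNReal.ofReal |L0 d m κm aminus G (n) x|)) :=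
        add_le_add (add_le_add hS1 hS2) hS3
    _ = ENNReal.ofReal (κm * C / m + κp / m + 1 / 2) * ∑' n : ℕ, ENNReal.ofReal (C ^ (n) / (Nat.factorial (n) : ℝ)) * (∫⁻ x : Fin (n) → Fin d → ℝ, ENNReal.ofReal |L0 d m κm aminus G (n) x|) := by
        rw [ENNReal.ofReal_add (by positivity) (by positivity),
          ENNReal.ofReal_add (by positivity) (by positivity)]
        ring
end

section
/- Assume κ⁺ Eₙ^{a⁺}(x) ≤ m n + κ⁻ Eₙ^{a⁻}(x) for every n ≥ 1 and x ∈ (ℝ^d)ⁿ. Then for every correlation-function sequence k with ‖k‖ < ∞, the sequence Sk satisfies ‖Sk‖ ≤ (C κ⁻/m + κ⁺/m + 1/C) ‖k‖. (The contraction estimate ‖S‖ ≤ Cκ⁻/m + κ⁺/m + 1/C at the heart of the proof of Theorem 6.1.) -/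
open MeasureTheory ENNReal

/-- The norm `‖k‖ = sup_n C⁻ⁿ ess sup_x |k⁽ⁿ⁾(x)|` of the space `𝒦_C`. -/
noncomputable def normKC (d : ℕ) (C : ℝ) (k : (n : ℕ) → (Fin n → (Fin d → ℝ)) → ℝ) : ℝ≥0∞ :=
  ⨆ n : ℕ, (ENNReal.ofReal (C ^ n))⁻¹ *
    essSup (fun x : Fin n → (Fin d → ℝ) => ENNReal.ofReal |k n x|) volume

/-- The operator `S` from the proof of Theorem 6.1: `(Sk)⁽⁰⁾ = 0` and for `n ≥ 1`,
`(Sk)⁽ⁿ⁾(x) = (mn + κ⁻Eₙ^{a⁻}(x))⁻¹ [ -κ⁻ Σ_j ∫ a⁻(y-xⱼ)k⁽ⁿ⁺¹⁾(x,y)dy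
  + κ⁺ Σ_i (Σ_{j≠i} a⁺(xᵢ-xⱼ)) k⁽ⁿ⁻¹⁾(x̂ᵢ) + κ⁺ Σ_j ∫ a⁺(y-xⱼ)k⁽ⁿ⁾(…,y,…)dy ]`. -/
noncomputable def Sop (d : ℕ) (m κm κp : ℝ) (aminus aplus : (Fin d → ℝ) → ℝ)
    (k : (n : ℕ) → (Fin n → (Fin d → ℝ)) → ℝ) :
    (n : ℕ) → (Fin n → (Fin d → ℝ)) → ℝ
  | 0 => fun _ => 0
  | (n + 1) => fun x =>
      (m * (n + 1) + κm * pairEnergy d aminus (n + 1) x)⁻¹ *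
        (-(κm * ∑ j : Fin (n + 1),
              ∫ y : Fin d → ℝ, aminus (y - x j) * k (n + 2) (Fin.snoc x y))
          + κp * ∑ i : Fin (n + 1),
              (∑ j : Fin (n + 1), if j ≠ i then aplus (x i - x j) else 0) *
                k n (x ∘ i.succAbove)
          + κp * ∑ j : Fin (n + 1),
              ∫ y : Fin d → ℝ, aplus (y - x j) * k (n + 1) (Function.update x j y))

private lemma qmp_comp_succAbove (d n : ℕ) (i : Fin (n+1)) :
    Measure.QuasiMeasurePreserving
      (fun x : Fin (n+1) → (Fin d → ℝ) => x ∘ i.succAbove)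
      volume volume :=
  Measure.quasiMeasurePreserving_snd.comp
    (volume_preserving_piFinSuccAbove (fun _ : Fin (n+1) => (Fin d → ℝ)) i).quasiMeasurePreserving

/-- Transfer an a.e. bound on level `n+2` to a doubly-a.e. bound along `Fin.snoc`. -/
private lemma ae_ae_snoc (d n : ℕ) (P : (Fin (n+2) → (Fin d → ℝ)) → Prop)
    (h : ∀ᵐ z ∂(volume : Measure (Fin (n+2) → (Fin d → ℝ))), P z) :
    ∀ᵐ x ∂(volume : Measure (Fin (n+1) → (Fin d → ℝ))),
      ∀ᵐ y ∂(volume : Measure (Fin d → ℝ)), P (Fin.snoc x y) := by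
  have hmp := (volume_preserving_piFinSuccAbove
      (fun _ : Fin (n+2) => (Fin d → ℝ)) (Fin.last (n+1))).symm
  have h1 : ∀ᵐ p ∂(volume : Measure ((Fin d → ℝ) × (Fin (n+1) → (Fin d → ℝ)))),
      P (Fin.snoc p.2 p.1) := by
    filter_upwards [hmp.quasiMeasurePreserving.ae h] with p hp
    rwa [show (MeasurableEquiv.piFinSuccAbove (fun _ : Fin (n+2) => (Fin d → ℝ))
        (Fin.last (n+1))).symm p = Fin.snoc p.2 p.1 by
      simp only [MeasurableEquiv.piFinSuccAbove_symm_apply]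
      exact Fin.insertNth_last' p.1 p.2] at hp
  have h2 : ∀ᵐ q ∂((volume : Measure (Fin (n+1) → (Fin d → ℝ))).prod
      (volume : Measure (Fin d → ℝ))), P (Fin.snoc q.1 q.2) := by
    have := (Measure.measurePreserving_swap (μ := (volume : Measure (Fin (n+1) → (Fin d → ℝ))))
      (ν := (volume : Measure (Fin d → ℝ)))).quasiMeasurePreserving.ae
      (by rw [← Measure.volume_eq_prod] at *; exact h1)
    exact this
  exact Measure.ae_ae_of_ae_prod h2

/-- Transfer an a.e. bound on level `n+1` to a doubly-a.e. bound along `Function.update`. -/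
private lemma ae_ae_update (d n : ℕ) (j : Fin (n+1)) (P : (Fin (n+1) → (Fin d → ℝ)) → Prop)
    (h : ∀ᵐ z ∂(volume : Measure (Fin (n+1) → (Fin d → ℝ))), P z) :
    ∀ᵐ x ∂(volume : Measure (Fin (n+1) → (Fin d → ℝ))),
      ∀ᵐ y ∂(volume : Measure (Fin d → ℝ)), P (Function.update x j y) := by
  have hmp := (volume_preserving_piFinSuccAbove
      (fun _ : Fin (n+1) => (Fin d → ℝ)) j).symm
  have h1 : ∀ᵐ p ∂(volume : Measure ((Fin d → ℝ) × (Fin n → (Fin d → ℝ)))),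
      P (j.insertNth p.1 p.2) :=
    hmp.quasiMeasurePreserving.ae h
  have h2 : ∀ᵐ q ∂((volume : Measure (Fin n → (Fin d → ℝ))).prod
      (volume : Measure (Fin d → ℝ))), P (j.insertNth q.2 q.1) := by
    have := (Measure.measurePreserving_swap (μ := (volume : Measure (Fin n → (Fin d → ℝ))))
      (ν := (volume : Measure (Fin d → ℝ)))).quasiMeasurePreserving.ae
      (by rw [← Measure.volume_eq_prod] at *; exact h1)
    exact this
  have h3 := Measure.ae_ae_of_ae_prod h2
  have h4 := (qmp_comp_succAbove d n j).ae h3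
  filter_upwards [h4] with x hx
  filter_upwards [hx] with y hy
  rw [← Fin.insertNth_removeNth]; exact hy

/-- The contraction estimate `‖Sk‖ ≤ (Cκ⁻/m + κ⁺/m + 1/C)‖k‖` at the heart of the proof
of Theorem 6.1, valid under `κ⁺Eₙ^{a⁺} ≤ mn + κ⁻Eₙ^{a⁻}`. -/
theorem stmt11 (d : ℕ) (hd : 1 ≤ d)
    (aminus aplus : (Fin d → ℝ) → ℝ)
    (ham_nonneg : ∀ x, 0 ≤ aminus x) (ham_even : ∀ x, aminus (-x) = aminus x)
    (ham_meas : Measurable aminus) (ham_int : Integrable aminus)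
    (ham_norm : ∫ x, aminus x = 1)
    (hap_nonneg : ∀ x, 0 ≤ aplus x) (hap_even : ∀ x, aplus (-x) = aplus x)
    (hap_meas : Measurable aplus) (hap_int : Integrable aplus)
    (hap_norm : ∫ x, aplus x = 1)
    (m κm κp C : ℝ) (hm : 0 < m) (hκm : 0 < κm) (hκp : 0 < κp) (hC : 0 < C)
    (hdom : ∀ (n : ℕ) (x : Fin (n + 1) → (Fin d → ℝ)),
      κp * pairEnergy d aplus (n + 1) x
        ≤ m * (n + 1) + κm * pairEnergy d aminus (n + 1) x)
    (k : (n : ℕ) → (Fin n → (Fin d → ℝ)) → ℝ) (hkmeas : ∀ n, Measurable (k n))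
    (hksymm : ∀ (n : ℕ) (σ : Equiv.Perm (Fin n)) (x : Fin n → (Fin d → ℝ)),
      k n (x ∘ σ) = k n x)
    (hknorm : normKC d C k < ⊤) :
    normKC d C (Sop d m κm κp aminus aplus k)
      ≤ ENNReal.ofReal (C * κm / m + κp / m + 1 / C) * normKC d C k := by
  classical
  have hK : normKC d C k ≠ ⊤ := hknorm.ne
  set Kt : ℝ := (normKC d C k).toReal with hKt
  have hKtnn : 0 ≤ Kt := ENNReal.toReal_nonneg
  set B : ℕ → ℝ := fun n => C ^ n * Kt with hBdef
  have hBnn : ∀ n, 0 ≤ B n := fun n => mul_nonneg (pow_nonneg hC.le n) hKtnn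
  set Q : ℝ := C * κm / m + κp / m + 1 / C with hQ
  have hQnn : 0 ≤ Q := by positivity
  -- a.e. bound for each level
  have hae : ∀ n : ℕ, ∀ᵐ z ∂(volume : Measure (Fin n → (Fin d → ℝ))), |k n z| ≤ B n := by
    intro n
    have hc0 : ENNReal.ofReal (C ^ n) ≠ 0 := (ENNReal.ofReal_pos.mpr (pow_pos hC n)).ne'
    have h1 : (ENNReal.ofReal (C ^ n))⁻¹ *
        essSup (fun x : Fin n → (Fin d → ℝ) => ENNReal.ofReal |k n x|) volume
          ≤ normKC d C k :=
      le_iSup (fun n : ℕ => (ENNReal.ofReal (C ^ n))⁻¹ *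
        essSup (fun x : Fin n → (Fin d → ℝ) => ENNReal.ofReal |k n x|) volume) n
    have h2 : essSup (fun x : Fin n → (Fin d → ℝ) => ENNReal.ofReal |k n x|) volume
        ≤ ENNReal.ofReal (B n) := by
      have h3 := mul_le_mul_right h1 (ENNReal.ofReal (C ^ n))
      rw [← mul_assoc, ENNReal.mul_inv_cancel hc0 ENNReal.ofReal_ne_top, one_mul] at h3
      calc essSup (fun x : Fin n → (Fin d → ℝ) => ENNReal.ofReal |k n x|) volume
          ≤ ENNReal.ofReal (C ^ n) * normKC d C k := h3
        _ = ENNReal.ofReal (C ^ n) * ENNReal.ofReal Kt := by rw [hKt, ENNReal.ofReal_toReal hK]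
        _ = ENNReal.ofReal (B n) := (ENNReal.ofReal_mul (pow_nonneg hC.le n)).symm
    filter_upwards [ENNReal.ae_le_essSup
      (fun x : Fin n → (Fin d → ℝ) => ENNReal.ofReal |k n x|)] with z hz
    exact (ENNReal.ofReal_le_ofReal_iff (hBnn n)).mp (hz.trans h2)
  -- main pointwise a.e. estimate at level n+1
  have hmain : ∀ n : ℕ, ∀ᵐ x ∂(volume : Measure (Fin (n+1) → (Fin d → ℝ))),
      |Sop d m κm κp aminus aplus k (n+1) x| ≤ Q * B (n+1) := by
    intro n
    have hsnoc := ae_ae_snoc d n (fun z => |k (n+2) z| ≤ B (n+2)) (hae (n+2))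
    have hupd : ∀ᵐ x ∂(volume : Measure (Fin (n+1) → (Fin d → ℝ))),
        ∀ j : Fin (n+1), ∀ᵐ y ∂(volume : Measure (Fin d → ℝ)),
          |k (n+1) (Function.update x j y)| ≤ B (n+1) :=
      ae_all_iff.mpr fun j => ae_ae_update d n j (fun z => |k (n+1) z| ≤ B (n+1)) (hae (n+1))
    have hsucc : ∀ᵐ x ∂(volume : Measure (Fin (n+1) → (Fin d → ℝ))),
        ∀ i : Fin (n+1), |k n (x ∘ i.succAbove)| ≤ B n :=
      ae_all_iff.mpr fun i => (qmp_comp_succAbove d n i).ae (hae n)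
    filter_upwards [hsnoc, hupd, hsucc] with x h1 h2 h3
    set D : ℝ := m * (n + 1) + κm * pairEnergy d aminus (n + 1) x with hDdef
    have hEm : 0 ≤ pairEnergy d aminus (n + 1) x := by
      apply Finset.sum_nonneg; intro i _; apply Finset.sum_nonneg; intro j _
      split <;> [exact ham_nonneg _; exact le_refl 0]
    have hn1 : (0:ℝ) < (n:ℝ) + 1 := by positivity
    have hD : 0 < D := by
      have : 0 < m * ((n:ℝ) + 1) := by positivity
      exact add_pos_of_pos_of_nonneg this (mul_nonneg hκm.le hEm)
    have hDm : m * ((n:ℝ) + 1) ≤ D := le_add_of_nonneg_right (mul_nonneg hκm.le hEm)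
    -- bound on the first sum
    have hS1 : |∑ j : Fin (n + 1),
        ∫ y : Fin d → ℝ, aminus (y - x j) * k (n + 2) (Fin.snoc x y)|
        ≤ ((n:ℝ) + 1) * B (n+2) := by
      calc |∑ j : Fin (n + 1), ∫ y : Fin d → ℝ, aminus (y - x j) * k (n + 2) (Fin.snoc x y)|
          ≤ ∑ j : Fin (n + 1),
            |∫ y : Fin d → ℝ, aminus (y - x j) * k (n + 2) (Fin.snoc x y)| :=
            Finset.abs_sum_le_sum_abs _ _
        _ ≤ ∑ _j : Fin (n + 1), B (n+2) := by
            apply Finset.sum_le_sum; intro j _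
            have hint : Integrable (fun y : Fin d → ℝ => aminus (y - x j) * B (n+2)) :=
              (ham_int.comp_sub_right (x j)).mul_const _
            calc |∫ y : Fin d → ℝ, aminus (y - x j) * k (n + 2) (Fin.snoc x y)|
                ≤ ∫ y : Fin d → ℝ, |aminus (y - x j) * k (n + 2) (Fin.snoc x y)| := by
                  simpa only [Real.norm_eq_abs] using norm_integral_le_integral_norm (μ := volume)
                    (fun y : Fin d → ℝ => aminus (y - x j) * k (n + 2) (Fin.snoc x y))
              _ ≤ ∫ y : Fin d → ℝ, aminus (y - x j) * B (n+2) := by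
                  apply integral_mono_of_nonneg
                  · filter_upwards with y; positivity
                  · exact hint
                  · filter_upwards [h1] with y hy
                    rw [abs_mul, abs_of_nonneg (ham_nonneg _)]
                    exact mul_le_mul_of_nonneg_left hy (ham_nonneg _)
              _ = B (n+2) := by
                  rw [integral_mul_const, integral_sub_right_eq_self aminus (x j),
                    ham_norm, one_mul]
        _ = ((n:ℝ) + 1) * B (n+2) := by
            rw [Finset.sum_const, Finset.card_univ, Fintype.card_fin, nsmul_eq_mul]
            push_cast; ring
    -- bound on the third sum
    have hS3 : |∑ j : Fin (n + 1),
        ∫ y : Fin d → ℝ, aplus (y - x j) * k (n + 1) (Function.update x j y)|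
        ≤ ((n:ℝ) + 1) * B (n+1) := by
      calc |∑ j : Fin (n + 1),
            ∫ y : Fin d → ℝ, aplus (y - x j) * k (n + 1) (Function.update x j y)|
          ≤ ∑ j : Fin (n + 1),
            |∫ y : Fin d → ℝ, aplus (y - x j) * k (n + 1) (Function.update x j y)| :=
            Finset.abs_sum_le_sum_abs _ _
        _ ≤ ∑ _j : Fin (n + 1), B (n+1) := by
            apply Finset.sum_le_sum; intro j _
            have hint : Integrable (fun y : Fin d → ℝ => aplus (y - x j) * B (n+1)) :=
              (hap_int.comp_sub_right (x j)).mul_const _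
            calc |∫ y : Fin d → ℝ, aplus (y - x j) * k (n + 1) (Function.update x j y)|
                ≤ ∫ y : Fin d → ℝ, |aplus (y - x j) * k (n + 1) (Function.update x j y)| := by
                  simpa only [Real.norm_eq_abs] using norm_integral_le_integral_norm (μ := volume)
                    (fun y : Fin d → ℝ => aplus (y - x j) * k (n + 1) (Function.update x j y))
              _ ≤ ∫ y : Fin d → ℝ, aplus (y - x j) * B (n+1) := by
                  apply integral_mono_of_nonneg
                  · filter_upwards with y; positivity
                  · exact hint
                  · filter_upwards [h2 j] with y hy
                    rw [abs_mul, abs_of_nonneg (hap_nonneg _)]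
                    exact mul_le_mul_of_nonneg_left hy (hap_nonneg _)
              _ = B (n+1) := by
                  rw [integral_mul_const, integral_sub_right_eq_self aplus (x j),
                    hap_norm, one_mul]
        _ = ((n:ℝ) + 1) * B (n+1) := by
            rw [Finset.sum_const, Finset.card_univ, Fintype.card_fin, nsmul_eq_mul]
            push_cast; ring
    -- bound on the middle sum
    have hS2 : |∑ i : Fin (n + 1),
        (∑ j : Fin (n + 1), if j ≠ i then aplus (x i - x j) else 0) * k n (x ∘ i.succAbove)|
        ≤ pairEnergy d aplus (n+1) x * B n := by
      have hcinn : ∀ i : Fin (n+1),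
          0 ≤ ∑ j : Fin (n + 1), (if j ≠ i then aplus (x i - x j) else 0) := by
        intro i; apply Finset.sum_nonneg; intro j _
        split <;> [exact hap_nonneg _; exact le_refl 0]
      calc |∑ i : Fin (n + 1),
            (∑ j : Fin (n + 1), if j ≠ i then aplus (x i - x j) else 0) * k n (x ∘ i.succAbove)|
          ≤ ∑ i : Fin (n + 1),
            |(∑ j : Fin (n + 1), if j ≠ i then aplus (x i - x j) else 0) * k n (x ∘ i.succAbove)| :=
            Finset.abs_sum_le_sum_abs _ _
        _ ≤ ∑ i : Fin (n + 1),
            (∑ j : Fin (n + 1), if j ≠ i then aplus (x i - x j) else 0) * B n := by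
            apply Finset.sum_le_sum; intro i _
            rw [abs_mul, abs_of_nonneg (hcinn i)]
            exact mul_le_mul_of_nonneg_left (h3 i) (hcinn i)
        _ = pairEnergy d aplus (n+1) x * B n := by
            rw [← Finset.sum_mul]
            congr 1
            refine Finset.sum_congr rfl fun i _ => Finset.sum_congr rfl fun j _ => ?_
            exact if_congr ne_comm rfl rfl
    have hS2' : κp * |∑ i : Fin (n + 1),
        (∑ j : Fin (n + 1), if j ≠ i then aplus (x i - x j) else 0) * k n (x ∘ i.succAbove)|
        ≤ D * B n := by
      calc κp * |∑ i : Fin (n + 1),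
            (∑ j : Fin (n + 1), if j ≠ i then aplus (x i - x j) else 0) * k n (x ∘ i.succAbove)|
          ≤ κp * (pairEnergy d aplus (n+1) x * B n) :=
            mul_le_mul_of_nonneg_left hS2 hκp.le
        _ = (κp * pairEnergy d aplus (n+1) x) * B n := by ring
        _ ≤ D * B n := mul_le_mul_of_nonneg_right (hdom n x) (hBnn n)
    -- put it together
    have hSval : Sop d m κm κp aminus aplus k (n+1) x =
        D⁻¹ * (-(κm * ∑ j : Fin (n + 1),
              ∫ y : Fin d → ℝ, aminus (y - x j) * k (n + 2) (Fin.snoc x y))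
          + κp * ∑ i : Fin (n + 1),
              (∑ j : Fin (n + 1), if j ≠ i then aplus (x i - x j) else 0) *
                k n (x ∘ i.succAbove)
          + κp * ∑ j : Fin (n + 1),
              ∫ y : Fin d → ℝ, aplus (y - x j) * k (n + 1) (Function.update x j y)) := rfl
    rw [hSval, abs_mul, abs_of_nonneg (inv_nonneg.mpr hD.le)]
    have hT : |(-(κm * ∑ j : Fin (n + 1),
              ∫ y : Fin d → ℝ, aminus (y - x j) * k (n + 2) (Fin.snoc x y))
          + κp * ∑ i : Fin (n + 1),
              (∑ j : Fin (n + 1), if j ≠ i then aplus (x i - x j) else 0) *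
                k n (x ∘ i.succAbove)
          + κp * ∑ j : Fin (n + 1),
              ∫ y : Fin d → ℝ, aplus (y - x j) * k (n + 1) (Function.update x j y))|
        ≤ κm * (((n:ℝ) + 1) * B (n+2)) + D * B n + κp * (((n:ℝ) + 1) * B (n+1)) := by
      refine (abs_add_le _ _).trans (add_le_add (le_trans (abs_add_le _ _) (add_le_add ?_ ?_)) ?_)
      · rw [abs_neg, abs_mul, abs_of_nonneg hκm.le]
        exact mul_le_mul_of_nonneg_left hS1 hκm.le
      · rw [abs_mul, abs_of_nonneg hκp.le]; exact hS2'
      · rw [abs_mul, abs_of_nonneg hκp.le]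
        exact mul_le_mul_of_nonneg_left hS3 hκp.le
    calc D⁻¹ * |_| ≤ D⁻¹ *
          (κm * (((n:ℝ) + 1) * B (n+2)) + D * B n + κp * (((n:ℝ) + 1) * B (n+1))) :=
          mul_le_mul_of_nonneg_left hT (inv_nonneg.mpr hD.le)
      _ = D⁻¹ * (κm * (((n:ℝ) + 1) * B (n+2))) + B n
            + D⁻¹ * (κp * (((n:ℝ) + 1) * B (n+1))) := by
          field_simp
      _ ≤ (m * ((n:ℝ) + 1))⁻¹ * (κm * (((n:ℝ) + 1) * B (n+2))) + B n
            + (m * ((n:ℝ) + 1))⁻¹ * (κp * (((n:ℝ) + 1) * B (n+1))) := by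
          have hinv : D⁻¹ ≤ (m * ((n:ℝ) + 1))⁻¹ := by
            apply inv_anti₀ (by positivity) hDm
          gcongr <;> positivity
      _ = Q * B (n+1) := by
          simp only [hBdef, hQ]
          have hm0 : m ≠ 0 := hm.ne'
          have hC0 : C ≠ 0 := hC.ne'
          have hn0 : ((n:ℝ) + 1) ≠ 0 := hn1.ne'
          field_simp
          ring
  -- assemble the essSup estimate into the norm bound
  rw [normKC]
  apply iSup_le
  intro n
  match n with
  | 0 =>
    have h0 : essSup (fun x : Fin 0 → (Fin d → ℝ) =>
        ENNReal.ofReal |Sop d m κm κp aminus aplus k 0 x|) volume = 0 := by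
      have : (fun x : Fin 0 → (Fin d → ℝ) =>
          ENNReal.ofReal |Sop d m κm κp aminus aplus k 0 x|) = fun _ => 0 := by
        funext x; simp [Sop]
      rw [this]
      exact essSup_const' 0
    rw [h0, mul_zero]
    exact bot_le
  | (n + 1) =>
    have hc0 : ENNReal.ofReal (C ^ (n+1)) ≠ 0 := (ENNReal.ofReal_pos.mpr (pow_pos hC _)).ne'
    have hess : essSup (fun x : Fin (n+1) → (Fin d → ℝ) =>
        ENNReal.ofReal |Sop d m κm κp aminus aplus k (n+1) x|) volume
        ≤ ENNReal.ofReal (Q * B (n+1)) := by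
      refine essSup_le_of_ae_le _ ?_
      filter_upwards [hmain n] with x hx
      exact ENNReal.ofReal_le_ofReal hx
    calc (ENNReal.ofReal (C ^ (n+1)))⁻¹ * essSup (fun x : Fin (n+1) → (Fin d → ℝ) =>
          ENNReal.ofReal |Sop d m κm κp aminus aplus k (n+1) x|) volume
        ≤ (ENNReal.ofReal (C ^ (n+1)))⁻¹ * ENNReal.ofReal (Q * B (n+1)) :=
          mul_le_mul_right hess _
      _ = (ENNReal.ofReal (C ^ (n+1)))⁻¹ *
            (ENNReal.ofReal (C ^ (n+1)) * ENNReal.ofReal (Q * Kt)) := by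
          rw [← ENNReal.ofReal_mul (pow_nonneg hC.le _)]
          congr 1
          rw [hBdef]
          ring_nf
      _ = ENNReal.ofReal (Q * Kt) := by
          rw [← mul_assoc, ENNReal.inv_mul_cancel hc0 ENNReal.ofReal_ne_top, one_mul]
      _ = ENNReal.ofReal Q * ENNReal.ofReal Kt := ENNReal.ofReal_mul hQnn
      _ = ENNReal.ofReal Q * normKC d C k := by rw [hKt, ENNReal.ofReal_toReal hK]
end

section
/- Let 0 < κ⁺ < 1, C > 0, α > 0, β := min(α κ⁺, C), and let B ⊆ ℝ^d be such that a⁺(x − y) ≥ α for all x, y ∈ B. Fix t ≥ 0. Suppose k⁽¹⁾ : [0,t] × ℝ^d → ℝ satisfies k⁽¹⁾(s, x) ≥ C e^{(κ⁺ − 1)s} for all s ∈ [0,t] and x ∈ B, and suppose k_t⁽²⁾ : (ℝ^d)² → ℝ satisfies, for all x₁, x₂ ∈ B, k_t⁽²⁾(x₁, x₂) ≥ κ⁺ ∫₀ᵗ e^{2(κ⁺ − 1)(t − s)} ( k⁽¹⁾(s, x₂) a⁺(x₁ − x₂) + k⁽¹⁾(s, x₁) a⁺(x₂ − x₁) ) ds.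 Then k_t⁽²⁾(x₁, x₂) ≥ 2 β² t e^{2(κ⁺ − 1)t} for all x₁, x₂ ∈ B. (Base case of the clustering lower bound (3.5) for the contact model.) -/
open MeasureTheory Real

/-- Base case of the clustering lower bound (3.5) for the continuous contact model
(mortality `m = 1`, branching intensity `0 < κ⁺ < 1`):
if `k⁽¹⁾(s,x) ≥ C e^{(κ⁺-1)s}` on `B` and `k_t⁽²⁾` dominates the Duhamel term, then
`k_t⁽²⁾(x₁,x₂) ≥ 2β²t e^{2(κ⁺-1)t}` on `B × B`, with `β = min(ακ⁺, C)`. -/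
theorem stmt12 (d : ℕ) (hd : 1 ≤ d)
    (aplus : (Fin d → ℝ) → ℝ)
    (hap_nonneg : ∀ x, 0 ≤ aplus x) (hap_even : ∀ x, aplus (-x) = aplus x)
    (hap_meas : Measurable aplus) (hap_int : Integrable aplus)
    (hap_norm : ∫ x, aplus x = 1)
    (κp C α : ℝ) (hκ0 : 0 < κp) (hκ1 : κp < 1) (hC : 0 < C) (hα : 0 < α)
    (β : ℝ) (hβ : β = min (α * κp) C)
    (B : Set (Fin d → ℝ)) (hB : ∀ x ∈ B, ∀ y ∈ B, α ≤ aplus (x - y))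
    (t : ℝ) (ht : 0 ≤ t)
    (k1 : ℝ → (Fin d → ℝ) → ℝ)
    (hk1 : ∀ s ∈ Set.Icc (0 : ℝ) t, ∀ x ∈ B, C * Real.exp ((κp - 1) * s) ≤ k1 s x)
    (hk1int : ∀ x₁ x₂ : Fin d → ℝ,
      IntervalIntegrable (fun s : ℝ => Real.exp (2 * (κp - 1) * (t - s)) *
        (k1 s x₂ * aplus (x₁ - x₂) + k1 s x₁ * aplus (x₂ - x₁))) volume 0 t)
    (k2 : (Fin d → ℝ) → (Fin d → ℝ) → ℝ)
    (hk2 : ∀ x₁ ∈ B, ∀ x₂ ∈ B,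
      κp * ∫ s in (0 : ℝ)..t, Real.exp (2 * (κp - 1) * (t - s)) *
          (k1 s x₂ * aplus (x₁ - x₂) + k1 s x₁ * aplus (x₂ - x₁))
        ≤ k2 x₁ x₂) :
    ∀ x₁ ∈ B, ∀ x₂ ∈ B,
      2 * β ^ 2 * t * Real.exp (2 * (κp - 1) * t) ≤ k2 x₁ x₂ := by
  intro x₁ hx₁ x₂ hx₂
  have key : 2 * C * α * Real.exp (2 * (κp - 1) * t) * t ≤
      ∫ s in (0:ℝ)..t, Real.exp (2 * (κp - 1) * (t - s)) *
          (k1 s x₂ * aplus (x₁ - x₂) + k1 s x₁ * aplus (x₂ - x₁)) := by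
    have hmono := intervalIntegral.integral_mono_on (μ := volume) ht
      (intervalIntegrable_const (c := 2 * C * α * Real.exp (2 * (κp - 1) * t)))
      (hk1int x₁ x₂) ?_
    · calc 2 * C * α * Real.exp (2 * (κp - 1) * t) * t
          = ∫ _ in (0:ℝ)..t, (2 * C * α * Real.exp (2 * (κp - 1) * t)) := by
            rw [intervalIntegral.integral_const]; simp [mul_comm]
        _ ≤ _ := hmono
    · intro s hs
      have hs0 : 0 ≤ s := hs.1
      have ha1 : α ≤ aplus (x₁ - x₂) := hB x₁ hx₁ x₂ hx₂
      have ha2 : α ≤ aplus (x₂ - x₁) := hB x₂ hx₂ x₁ hx₁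
      have hCk : C * Real.exp ((κp - 1) * s) ≤ k1 s x₁ := hk1 s hs x₁ hx₁
      have hCk2 : C * Real.exp ((κp - 1) * s) ≤ k1 s x₂ := hk1 s hs x₂ hx₂
      have hCe : 0 ≤ C * Real.exp ((κp - 1) * s) :=
        mul_nonneg hC.le (Real.exp_pos _).le
      have h1 : C * Real.exp ((κp - 1) * s) * α ≤ k1 s x₂ * aplus (x₁ - x₂) :=
        mul_le_mul hCk2 ha1 hα.le (hCe.trans hCk2)
      have h2 : C * Real.exp ((κp - 1) * s) * α ≤ k1 s x₁ * aplus (x₂ - x₁) :=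
        mul_le_mul hCk ha2 hα.le (hCe.trans hCk)
      have hsum : 2 * (C * Real.exp ((κp - 1) * s) * α) ≤
          k1 s x₂ * aplus (x₁ - x₂) + k1 s x₁ * aplus (x₂ - x₁) := by
        linarith
      have hexp : Real.exp (2 * (κp - 1) * t) ≤
          Real.exp (2 * (κp - 1) * (t - s)) * Real.exp ((κp - 1) * s) := by
        rw [← Real.exp_add, Real.exp_le_exp]
        nlinarith [hs0, hκ1]
      calc 2 * C * α * Real.exp (2 * (κp - 1) * t)
          ≤ 2 * C * α * (Real.exp (2 * (κp - 1) * (t - s)) * Real.exp ((κp - 1) * s)) := by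
            apply mul_le_mul_of_nonneg_left hexp
            positivity
        _ = Real.exp (2 * (κp - 1) * (t - s)) * (2 * (C * Real.exp ((κp - 1) * s) * α)) := by
            ring
        _ ≤ Real.exp (2 * (κp - 1) * (t - s)) *
              (k1 s x₂ * aplus (x₁ - x₂) + k1 s x₁ * aplus (x₂ - x₁)) := by
            apply mul_le_mul_of_nonneg_left hsum (Real.exp_pos _).le
  have hβpos : 0 < β := by rw [hβ]; exact lt_min (by positivity) hC
  have hβ2 : β ^ 2 ≤ κp * C * α := by
    have h1 : β ≤ α * κp := hβ ▸ min_le_left _ _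
    have h2 : β ≤ C := hβ ▸ min_le_right _ _
    nlinarith
  calc 2 * β ^ 2 * t * Real.exp (2 * (κp - 1) * t)
      ≤ 2 * (κp * C * α) * t * Real.exp (2 * (κp - 1) * t) := by
        have he := Real.exp_pos (2 * (κp - 1) * t)
        nlinarith [mul_nonneg (mul_nonneg (sub_nonneg.2 hβ2) ht) he.le]
    _ = κp * (2 * C * α * Real.exp (2 * (κp - 1) * t) * t) := by ring
    _ ≤ κp * (∫ s in (0:ℝ)..t, Real.exp (2 * (κp - 1) * (t - s)) *
          (k1 s x₂ * aplus (x₁ - x₂) + k1 s x₁ * aplus (x₂ - x₁))) :=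
        mul_le_mul_of_nonneg_left key hκ0.le
    _ ≤ k2 x₁ x₂ := hk2 x₁ hx₁ x₂ hx₂
end

section
/- Let 0 < κ⁺ < 1, α > 0, 0 < β ≤ α κ⁺, and let B ⊆ ℝ^d be such that a⁺(x − y) ≥ α for all x, y ∈ B. Fix an integer n ≥ 2 and t ≥ 1. Suppose k⁽ⁿ⁻¹⁾ : [0,t] × (ℝ^d)^{n−1} → ℝ satisfies k⁽ⁿ⁻¹⁾(s, y) ≥ β^{n−1} e^{(n−1)(κ⁺ − 1)s} (n−1)! for all s ∈ [0,t] and y ∈ B^{n−1}, and suppose k_t⁽ⁿ⁾ : (ℝ^d)ⁿ → ℝ satisfies, for all (x₁,…,xₙ) ∈ Bⁿ, k_t⁽ⁿ⁾(x₁,…,xₙ) ≥ κ⁺ ∫₀ᵗ e^{n(κ⁺ − 1)(t − s)} Σ_{i=1}^n k⁽ⁿ⁻¹⁾(s, (x₁,…,x̂ᵢ,…,xₙ)) Σ_{j≠i} a⁺(xᵢ − xⱼ) ds, where x̂ᵢ means the i-th argument is omitted. Then k_t⁽ⁿ⁾(x₁,…,xₙ) ≥ βⁿ e^{n(κ⁺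 − 1)t} n! for all (x₁,…,xₙ) ∈ Bⁿ. (Induction step of the clustering lower bound (3.5) for the contact model.) -/
open MeasureTheory Real

/-- Induction step of the clustering lower bound (3.5) for the continuous contact model
(mortality `m = 1`, branching intensity `0 < κ⁺ < 1`): here the integer `n ≥ 2` of the
informal statement is represented as `n + 2`. If
`k⁽ⁿ⁻¹⁾(s,y) ≥ β^{n-1} e^{(n-1)(κ⁺-1)s}(n-1)!` on `B^{n-1}` for `s ∈ [0,t]`, `t ≥ 1`,
and `k_t⁽ⁿ⁾` dominates the Duhamel term, then
`k_t⁽ⁿ⁾(x) ≥ βⁿ e^{n(κ⁺-1)t} n!` on `Bⁿ`. -/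
theorem stmt13 (d : ℕ) (hd : 1 ≤ d)
    (aplus : (Fin d → ℝ) → ℝ)
    (hap_nonneg : ∀ x, 0 ≤ aplus x) (hap_even : ∀ x, aplus (-x) = aplus x)
    (hap_meas : Measurable aplus) (hap_int : Integrable aplus)
    (hap_norm : ∫ x, aplus x = 1)
    (κp α β : ℝ) (hκ0 : 0 < κp) (hκ1 : κp < 1) (hα : 0 < α)
    (hβ0 : 0 < β) (hβ : β ≤ α * κp)
    (B : Set (Fin d → ℝ)) (hB : ∀ x ∈ B, ∀ y ∈ B, α ≤ aplus (x - y))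
    (n : ℕ) (t : ℝ) (ht : 1 ≤ t)
    (kprev : ℝ → (Fin (n + 1) → (Fin d → ℝ)) → ℝ)
    (hkprev : ∀ s ∈ Set.Icc (0 : ℝ) t, ∀ y : Fin (n + 1) → (Fin d → ℝ),
      (∀ i, y i ∈ B) →
        β ^ (n + 1) * Real.exp ((n + 1) * (κp - 1) * s) * (n + 1).factorial ≤ kprev s y)
    (hint : ∀ x : Fin (n + 2) → (Fin d → ℝ),
      IntervalIntegrable (fun s : ℝ =>
        Real.exp ((n + 2) * (κp - 1) * (t - s)) *
          ∑ i : Fin (n + 2), kprev s (x ∘ i.succAbove) *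
            ∑ j : Fin (n + 2), if j ≠ i then aplus (x i - x j) else 0) volume 0 t)
    (kt : (Fin (n + 2) → (Fin d → ℝ)) → ℝ)
    (hkt : ∀ x : Fin (n + 2) → (Fin d → ℝ), (∀ i, x i ∈ B) →
      (κp * ∫ s in (0 : ℝ)..t,
          Real.exp ((n + 2) * (κp - 1) * (t - s)) *
            ∑ i : Fin (n + 2), kprev s (x ∘ i.succAbove) *
              ∑ j : Fin (n + 2), if j ≠ i then aplus (x i - x j) else 0)
        ≤ kt x) :
    ∀ x : Fin (n + 2) → (Fin d → ℝ), (∀ i, x i ∈ B) →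
      β ^ (n + 2) * Real.exp ((n + 2) * (κp - 1) * t) * (n + 2).factorial ≤ kt x := by

  intro x hx
  push_cast at hkprev hint hkt ⊢
  have ht0 : (0:ℝ) ≤ t := zero_le_one.trans ht
  set E : ℝ := Real.exp (((n:ℝ) + 2) * (κp - 1) * t) with hE
  have hEpos : 0 < E := Real.exp_pos _
  set D : ℝ := ((n:ℝ)+2) * (((n:ℝ)+1) * α) * (β ^ (n+1) * (n+1).factorial) * E with hD
  -- pointwise lower bound on the integrand
  have hpt : ∀ s ∈ Set.Icc (0:ℝ) t,
      D ≤ Real.exp (((n:ℝ) + 2) * (κp - 1) * (t - s)) *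
        ∑ i : Fin (n + 2), kprev s (x ∘ i.succAbove) *
          ∑ j : Fin (n + 2), if j ≠ i then aplus (x i - x j) else 0 := by
    intro s hs
    obtain ⟨hs0, hst⟩ := hs
    set L : ℝ := β ^ (n + 1) * Real.exp (((n:ℝ) + 1) * (κp - 1) * s) * (n + 1).factorial with hLdef
    have hLpos : 0 < L := by positivity
    have hinner : ∀ i : Fin (n+2),
        ((n:ℝ)+1) * α ≤ ∑ j : Fin (n+2), if j ≠ i then aplus (x i - x j) else 0 := by
      intro i
      have h1 : ∑ j : Fin (n+2), (if j ≠ i then α else 0)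
          ≤ ∑ j : Fin (n+2), if j ≠ i then aplus (x i - x j) else 0 :=
        Finset.sum_le_sum fun j _ => by
          by_cases h : j ≠ i
          · simpa [h] using hB _ (hx i) _ (hx j)
          · simp [h]
      have h2 : ∑ j : Fin (n+2), (if j ≠ i then α else 0) = ((n:ℝ)+1) * α := by
        rw [← Finset.sum_filter, Finset.sum_const, Finset.filter_ne',
          Finset.card_erase_of_mem (Finset.mem_univ i)]
        simp only [Finset.card_univ, Fintype.card_fin, nsmul_eq_mul]
        push_cast
        ring
      linarith [h1, h2.ge]
    have hterm : ∀ i : Fin (n+2),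
        L * (((n:ℝ)+1) * α) ≤ kprev s (x ∘ i.succAbove) *
          ∑ j : Fin (n+2), if j ≠ i then aplus (x i - x j) else 0 := by
      intro i
      have hk : L ≤ kprev s (x ∘ i.succAbove) :=
        hkprev s ⟨hs0, hst⟩ (x ∘ i.succAbove) (fun j => hx _)
      exact mul_le_mul hk (hinner i) (by positivity) (hLpos.le.trans hk)
    have hsum : ((n:ℝ)+2) * (L * (((n:ℝ)+1) * α)) ≤
        ∑ i : Fin (n+2), kprev s (x ∘ i.succAbove) *
          ∑ j : Fin (n+2), if j ≠ i then aplus (x i - x j) else 0 := by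
      calc ((n:ℝ)+2) * (L * (((n:ℝ)+1) * α))
          = ∑ _i : Fin (n+2), L * (((n:ℝ)+1) * α) := by
            rw [Finset.sum_const, Finset.card_univ]
            simp only [Fintype.card_fin, nsmul_eq_mul]
            push_cast
            ring
        _ ≤ _ := Finset.sum_le_sum fun i _ => hterm i
    have hExp : E ≤ Real.exp (((n:ℝ) + 2) * (κp - 1) * (t - s)) *
        Real.exp (((n:ℝ) + 1) * (κp - 1) * s) := by
      rw [hE, ← Real.exp_add]
      apply Real.exp_le_exp.2
      nlinarith [mul_nonneg (sub_nonneg.2 hκ1.le) hs0]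
    set C0 : ℝ := ((n:ℝ)+2) * (β ^ (n+1) * (n+1).factorial) * (((n:ℝ)+1) * α) with hC0
    have hC0pos : 0 < C0 := by positivity
    calc D = C0 * E := by rw [hD, hC0]; ring
      _ ≤ C0 * (Real.exp (((n:ℝ) + 2) * (κp - 1) * (t - s)) *
            Real.exp (((n:ℝ) + 1) * (κp - 1) * s)) :=
          mul_le_mul_of_nonneg_left hExp hC0pos.le
      _ = Real.exp (((n:ℝ) + 2) * (κp - 1) * (t - s)) *
            (((n:ℝ)+2) * (L * (((n:ℝ)+1) * α))) := by rw [hC0, hLdef]; ring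
      _ ≤ _ := mul_le_mul_of_nonneg_left hsum (Real.exp_pos _).le
  -- integral lower bound
  have hI : t * D ≤ ∫ s in (0:ℝ)..t,
      Real.exp (((n:ℝ) + 2) * (κp - 1) * (t - s)) *
        ∑ i : Fin (n + 2), kprev s (x ∘ i.succAbove) *
          ∑ j : Fin (n + 2), if j ≠ i then aplus (x i - x j) else 0 := by
    have h := intervalIntegral.integral_mono_on (μ := volume) ht0
      (intervalIntegrable_const (c := D)) (hint x) hpt
    rwa [intervalIntegral.integral_const, sub_zero, smul_eq_mul] at h
  have hchain := (mul_le_mul_of_nonneg_left hI hκ0.le).trans (hkt x hx)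
  have hb2 : β ≤ κp * α * (t * ((n:ℝ)+1)) := by
    have h1 : (1:ℝ) ≤ t * ((n:ℝ)+1) := by
      have h2 : (1:ℝ) ≤ (n:ℝ)+1 := by linarith [Nat.cast_nonneg (α := ℝ) n]
      nlinarith
    nlinarith [mul_pos hα hκ0]
  have hfact : ((n+2).factorial : ℝ) = ((n:ℝ)+2) * (n+1).factorial := by
    rw [Nat.factorial_succ]
    push_cast
    ring
  have hfinal : β ^ (n+2) * E * (n+2).factorial ≤ κp * (t * D) := by
    rw [hfact, hD, pow_succ]
    have hnn : (0:ℝ) ≤ β ^ (n+1) * E * (((n:ℝ)+2) * (n+1).factorial) := by positivity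
    calc β ^ (n+1) * β * E * (((n:ℝ)+2) * (n+1).factorial)
        = (β ^ (n+1) * E * (((n:ℝ)+2) * (n+1).factorial)) * β := by ring
      _ ≤ (β ^ (n+1) * E * (((n:ℝ)+2) * (n+1).factorial)) * (κp * α * (t * ((n:ℝ)+1))) :=
          mul_le_mul_of_nonneg_left hb2 hnn
      _ = κp * (t * (((n:ℝ)+2) * (((n:ℝ)+1) * α) * (β ^ (n+1) * (n+1).factorial) * E)) := by
          ring
  exact hfinal.trans hchain
end

section
/- Let a⁻, a⁺ : ℝ^d → ℝ be nonnegative measurable integrable functions with ∫_{ℝ^d} a⁻(x)dx = 1, let κ⁻, κ⁺, C, m > 0, b ≥ 0, and let z > 0 be such that a⁺(x) ≥ z a⁻(x) for all x ∈ ℝ^d. For R > 0 write Λ_R := [−R, R]^d and A_R^{±} := ∫_{Λ_R} ∫_{Λ_R} a^{±}(x − y) dx dy. Suppose that for every t > 0 and every R > 0: κ⁺ A_R^{+} − κ⁻ C t A_R^{−} − m |Λ_R| − (b/(C t)) (1 − e^{−C t |Λ_R|}) ≤ 0, where |Λ_R| = (2R)^d is the Lebesgue measure of Λ_R. Then m ≥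 z κ⁺. (Section 7: the accretivity of L̂ − b on 𝓛_C forces the mortality m to be large; m cannot be arbitrarily small.) -/
open MeasureTheory Real

/-- The cube `Λ_R = [-R, R]^d` in `ℝ^d`. -/
def cube (d : ℕ) (R : ℝ) : Set (Fin d → ℝ) :=
  Set.pi Set.univ fun _ : Fin d => Set.Icc (-R) R

/-- `A_R = ∫_{Λ_R}∫_{Λ_R} a(x-y) dx dy`. -/
noncomputable def cubeEnergy (d : ℕ) (a : (Fin d → ℝ) → ℝ) (R : ℝ) : ℝ :=
  ∫ x in cube d R, ∫ y in cube d R, a (x - y)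

lemma cube_measurableSet (d : ℕ) (R : ℝ) : MeasurableSet (cube d R) :=
  MeasurableSet.univ_pi fun _ => measurableSet_Icc

lemma cube_mono (d : ℕ) {R R' : ℝ} (h : R ≤ R') : cube d R ⊆ cube d R' :=
  fun x hx i _ => Set.Icc_subset_Icc (neg_le_neg h) h (hx i trivial)

lemma cube_volume (d : ℕ) {R : ℝ} (hR : 0 ≤ R) :
    volume (cube d R) = ENNReal.ofReal ((2 * R) ^ d) := by
  rw [cube, volume_pi_pi]
  have h2 : R - -R = 2 * R := by ring
  simp only [Real.volume_Icc, h2]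
  rw [Finset.prod_const, Finset.card_univ, Fintype.card_fin,
    ← ENNReal.ofReal_pow (by linarith)]

lemma cube_volume_ne_top (d : ℕ) {R : ℝ} (hR : 0 ≤ R) : volume (cube d R) ≠ ⊤ := by
  rw [cube_volume d hR]; exact ENNReal.ofReal_ne_top

lemma cube_volume_toReal (d : ℕ) {R : ℝ} (hR : 0 ≤ R) :
    (volume (cube d R)).toReal = (2 * R) ^ d := by
  rw [cube_volume d hR, ENNReal.toReal_ofReal (by positivity)]

section F

variable {d : ℕ} {a : (Fin d → ℝ) → ℝ}

lemma F_strongly_meas (ha_meas : Measurable a) (R : ℝ) :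
    StronglyMeasurable (fun x : Fin d → ℝ => ∫ y in cube d R, a (x - y)) := by
  have h : StronglyMeasurable (fun p : (Fin d → ℝ) × (Fin d → ℝ) => a (p.1 - p.2)) :=
    (ha_meas.comp measurable_sub).stronglyMeasurable
  exact h.integral_prod_right'

lemma F_le (ha_int : Integrable a) (ha_nonneg : ∀ x, 0 ≤ a x) (R : ℝ) (x : Fin d → ℝ) :
    ∫ y in cube d R, a (x - y) ≤ ∫ u, a u := by
  calc ∫ y in cube d R, a (x - y) ≤ ∫ y, a (x - y) :=
        setIntegral_le_integral (ha_int.comp_sub_left x) (ae_of_all _ fun y => ha_nonneg _)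
    _ = ∫ u, a u := integral_sub_left_eq_self a volume x

lemma F_intOn (ha_int : Integrable a) (ha_nonneg : ∀ x, 0 ≤ a x) (ha_meas : Measurable a)
    (R : ℝ) {R' : ℝ} (hR' : 0 ≤ R') :
    IntegrableOn (fun x : Fin d → ℝ => ∫ y in cube d R, a (x - y)) (cube d R') := by
  refine Integrable.mono' (g := fun _ => ∫ u, a u)
    ((integrableOn_const_iff).mpr (Or.inr ?_))
    ((F_strongly_meas ha_meas R).aestronglyMeasurable.restrict)
    (ae_of_all _ fun x => ?_)
  · rw [cube_volume d hR']; exact ENNReal.ofReal_lt_top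
  · rw [Real.norm_eq_abs, abs_of_nonneg (integral_nonneg fun y => ha_nonneg _)]
    exact F_le ha_int ha_nonneg R x

lemma F_lower (ha_int : Integrable a) (ha_nonneg : ∀ x, 0 ≤ a x)
    {R₀ R : ℝ} (h0 : 0 ≤ R₀) {x : Fin d → ℝ} (hx : x ∈ cube d (R - R₀)) :
    ∫ u in cube d R₀, a u ≤ ∫ y in cube d R, a (x - y) := by
  have hemb : MeasurableEmbedding (fun w : Fin d → ℝ => x - w) :=
    (MeasurableEquiv.subLeft x).measurableEmbedding
  have hmp : MeasurePreserving (fun w : Fin d → ℝ => x - w) volume volume :=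
    Measure.measurePreserving_sub_left volume x
  have key := hmp.setIntegral_preimage_emb hemb a (cube d R₀)
  rw [← key]
  refine setIntegral_mono_set (ha_int.comp_sub_left x).integrableOn
    (ae_of_all _ fun y => ha_nonneg _) (HasSubset.Subset.eventuallyLE fun w hw => ?_)
  intro i _
  have h1 : (x - w) i ∈ Set.Icc (-R₀) R₀ := hw i trivial
  have h2 : x i ∈ Set.Icc (-(R - R₀)) (R - R₀) := hx i trivial
  simp only [Pi.sub_apply, Set.mem_Icc] at h1 h2 ⊢
  constructor <;> linarith [h1.1, h1.2, h2.1, h2.2]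

lemma energy_lower (ha_int : Integrable a) (ha_nonneg : ∀ x, 0 ≤ a x) (ha_meas : Measurable a)
    {R₀ R : ℝ} (h0 : 0 ≤ R₀) (hR : R₀ ≤ R) :
    (∫ u in cube d R₀, a u) * (2 * (R - R₀)) ^ d ≤ cubeEnergy d a R := by
  have hR0 : (0:ℝ) ≤ R - R₀ := by linarith
  have h1 : (∫ u in cube d R₀, a u) * (volume (cube d (R - R₀))).toReal
      ≤ ∫ x in cube d (R - R₀), ∫ y in cube d R, a (x - y) :=
    setIntegral_ge_of_const_le_real (cube_measurableSet d _) (cube_volume_ne_top d hR0)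
      (fun x hx => F_lower ha_int ha_nonneg h0 hx)
      (F_intOn ha_int ha_nonneg ha_meas R hR0)
  rw [cube_volume_toReal d hR0] at h1
  refine h1.trans ?_
  exact setIntegral_mono_set (F_intOn ha_int ha_nonneg ha_meas R (le_trans h0 hR))
    (ae_of_all _ fun x => integral_nonneg fun y => ha_nonneg _)
    (HasSubset.Subset.eventuallyLE (cube_mono d (by linarith)))

lemma energy_upper (ha_int : Integrable a) (ha_nonneg : ∀ x, 0 ≤ a x) (ha_meas : Measurable a)
    {R : ℝ} (hR : 0 ≤ R) :
    cubeEnergy d a R ≤ (∫ u, a u) * (2 * R) ^ d := by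
  have h1 : cubeEnergy d a R ≤ ∫ _x in cube d R, (∫ u, a u) :=
    setIntegral_mono_on (F_intOn ha_int ha_nonneg ha_meas R hR)
      ((integrableOn_const_iff).mpr (Or.inr (by rw [cube_volume d hR]; exact ENNReal.ofReal_lt_top)))
      (cube_measurableSet d R) (fun x _ => F_le ha_int ha_nonneg R x)
  rw [setIntegral_const, Measure.real, cube_volume_toReal d hR, smul_eq_mul] at h1
  linarith [h1]

lemma energy_nonneg (ha_nonneg : ∀ x, 0 ≤ a x) (R : ℝ) : 0 ≤ cubeEnergy d a R :=
  integral_nonneg fun x => integral_nonneg fun y => ha_nonneg _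

end F

lemma energy_z_le {d : ℕ} {aminus aplus : (Fin d → ℝ) → ℝ}
    (ham_int : Integrable aminus) (ham_nonneg : ∀ x, 0 ≤ aminus x) (ham_meas : Measurable aminus)
    (hap_int : Integrable aplus) (hap_nonneg : ∀ x, 0 ≤ aplus x) (hap_meas : Measurable aplus)
    {z : ℝ} (hz : 0 ≤ z) (hza : ∀ x, z * aminus x ≤ aplus x) {R : ℝ} (hR : 0 ≤ R) :
    z * cubeEnergy d aminus R ≤ cubeEnergy d aplus R := by
  unfold cubeEnergy
  rw [← integral_const_mul]
  refine setIntegral_mono_on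
    ((F_intOn ham_int ham_nonneg ham_meas R hR).const_mul z)
    (F_intOn hap_int hap_nonneg hap_meas R hR)
    (cube_measurableSet d R) (fun x _ => ?_)
  rw [← integral_const_mul]
  exact setIntegral_mono ((ham_int.comp_sub_left x).integrableOn.const_mul z)
    (hap_int.comp_sub_left x).integrableOn (fun y => hza _)

lemma exists_cube_R₀ {d : ℕ} {a : (Fin d → ℝ) → ℝ}
    (ha_int : Integrable a) (ha_nonneg : ∀ x, 0 ≤ a x) {η : ℝ} (hη : 0 < η) :
    ∃ R₀ : ℝ, 1 ≤ R₀ ∧ (∫ u, a u) - η ≤ ∫ u in cube d R₀, a u := by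
  have hunion : ⋃ n : ℕ, cube d (n : ℝ) = Set.univ := by
    ext x
    simp only [Set.mem_iUnion, Set.mem_univ, iff_true]
    obtain ⟨n, hn⟩ := exists_nat_ge ‖x‖
    refine ⟨n, fun i _ => Set.mem_Icc.mpr ?_⟩
    have := (abs_le.mp ((norm_le_pi_norm x i).trans hn))
    simpa [Real.norm_eq_abs, abs_le] using this
  have htend := tendsto_setIntegral_of_monotone (μ := volume) (f := a)
    (fun n : ℕ => cube_measurableSet d n)
    (fun n m h => cube_mono d (Nat.cast_le.mpr h))
    (by rw [hunion]; exact ha_int.integrableOn)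
  rw [hunion, Measure.restrict_univ] at htend
  have hev : ∀ᶠ n : ℕ in Filter.atTop, (∫ u, a u) - η < ∫ u in cube d (n : ℝ), a u :=
    htend.eventually (eventually_gt_nhds (by linarith))
  obtain ⟨n, hn⟩ := hev.exists
  refine ⟨max (n : ℝ) 1, le_max_right _ _, le_trans hn.le ?_⟩
  exact setIntegral_mono_set ha_int.integrableOn (ae_of_all _ fun y => ha_nonneg _)
    (HasSubset.Subset.eventuallyLE (cube_mono d (le_max_left _ _)))

lemma arith_hb1 {K η δ ε : ℝ} (hK0 : 0 < K) (hη0 : 0 ≤ η) (hδ0 : 0 ≤ δ)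
    (hηK : K * η ≤ ε / 4) (hδK : K * δ ≤ ε / 4) : K - ε / 2 ≤ K * (1 - η) * (1 - δ) := by
  have hprod : 0 ≤ K * η * δ := mul_nonneg (mul_nonneg hK0.le hη0) hδ0
  nlinarith [hηK, hδK, hprod]

set_option maxHeartbeats 1000000 in
/-- Section 7: if `a⁺ ≥ z a⁻` and the accretivity inequality
`κ⁺A_R⁺ - κ⁻CtA_R⁻ - m|Λ_R| - (b/(Ct))(1 - e^{-Ct|Λ_R|})`
holds for all `t > 0` and all `R > 0`, then `m ≥ zκ⁺`. -/
theorem stmt17 (d : ℕ) (hd : 1 ≤ d)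
    (aminus aplus : (Fin d → ℝ) → ℝ)
    (ham_nonneg : ∀ x, 0 ≤ aminus x) (ham_meas : Measurable aminus)
    (ham_int : Integrable aminus) (ham_norm : ∫ x, aminus x = 1)
    (hap_nonneg : ∀ x, 0 ≤ aplus x) (hap_meas : Measurable aplus)
    (hap_int : Integrable aplus)
    (κm κp C m : ℝ) (hκm : 0 < κm) (hκp : 0 < κp) (hC : 0 < C) (hm : 0 < m)
    (b : ℝ) (hb : 0 ≤ b)
    (z : ℝ) (hz : 0 < z) (hza : ∀ x, z * aminus x ≤ aplus x)
    (hacc : ∀ t : ℝ, 0 < t → ∀ R : ℝ, 0 < R →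
      κp * cubeEnergy d aplus R - κm * C * t * cubeEnergy d aminus R
          - m * (2 * R) ^ d
          - (b / (C * t)) * (1 - Real.exp (-(C * t * (2 * R) ^ d))) ≤ 0) :
    z * κp ≤ m := by
  refine le_of_forall_sub_le fun ε hε => ?_
  set K := z * κp with hKdef
  have hK0 : 0 < K := mul_pos hz hκp
  have hd1 : (1:ℝ) ≤ (d:ℝ) := by exact_mod_cast hd
  set η := min (ε / (4 * K)) (1 / 2) with hηdef
  have hη0 : 0 < η := lt_min (by positivity) (by norm_num)
  have hη2 : η ≤ 1 / 2 := min_le_right _ _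
  have hηK : K * η ≤ ε / 4 := by
    have h1 : η ≤ ε / (4 * K) := min_le_left _ _
    calc K * η ≤ K * (ε / (4 * K)) := mul_le_mul_of_nonneg_left h1 hK0.le
      _ = ε / 4 := by field_simp
  obtain ⟨R₀, hR₀1, hI⟩ := exists_cube_R₀ (d := d) ham_int ham_nonneg hη0
  rw [ham_norm] at hI
  set t := ε / (4 * κm * C) with htdef
  have ht0 : 0 < t := by positivity
  have hκmCt : κm * C * t = ε / 4 := by rw [htdef]; field_simp
  have hR₀0 : (0:ℝ) < R₀ := by linarith
  set R := max (max (4 * K * d * R₀ / ε) (4 * b / (C * t * ε))) (R₀ + 1) with hRdef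
  have hRR₀ : R₀ + 1 ≤ R := le_max_right _ _
  have hR1 : 1 ≤ R := by linarith
  have hR0 : (0:ℝ) < R := by linarith
  have hRge1 : 4 * K * d * R₀ / ε ≤ R := le_trans (le_max_left _ _) (le_max_left _ _)
  have hRge2 : 4 * b / (C * t * ε) ≤ R := le_trans (le_max_right _ _) (le_max_left _ _)
  have hR₀R : R₀ ≤ R := by linarith
  set δ := (d : ℝ) * R₀ / R with hδdef
  have hδ0 : 0 ≤ δ := by positivity
  have hδK : K * δ ≤ ε / 4 := by
    have hq0 : (0:ℝ) < 4 * K * d * R₀ / ε := by positivity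
    have h2 : (K * d * R₀) / R ≤ (K * d * R₀) / (4 * K * d * R₀ / ε) := by
      gcongr <;> first | positivity | exact hRge1
    have h3 : (K * d * R₀) / (4 * K * d * R₀ / ε) = ε / 4 := by
      field_simp
      try ring
    have h4 : K * δ = (K * d * R₀) / R := by rw [hδdef]; ring
    rw [h4]; rw [h3] at h2; exact h2
  clear_value K η t
  -- Bernoulli
  have hQ0 : (0:ℝ) ≤ (2 * (R - R₀)) ^ d := pow_nonneg (by linarith) d
  have hber : (1 - δ) * (2 * R) ^ d ≤ (2 * (R - R₀)) ^ d := by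
    have h1 : 2 * (R - R₀) = (2 * R) * (1 - R₀ / R) := by field_simp
    have hrr : R₀ / R ≤ 1 := (div_le_one hR0).mpr hR₀R
    have hrr0 : 0 ≤ R₀ / R := by positivity
    have h2 : 1 + (d:ℝ) * (-(R₀ / R)) ≤ (1 + -(R₀ / R)) ^ d :=
      one_add_mul_le_pow (by linarith) d
    have hδeq : δ = (d:ℝ) * (R₀ / R) := by rw [hδdef]; ring
    have h3 : 1 - δ ≤ (1 - R₀ / R) ^ d := by
      rw [hδeq]
      have : (1 : ℝ) + -(R₀ / R) = 1 - R₀ / R := by ring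
      rw [this] at h2
      linarith
    calc (1 - δ) * (2 * R) ^ d ≤ (1 - R₀ / R) ^ d * (2 * R) ^ d :=
          mul_le_mul_of_nonneg_right h3 (by positivity)
      _ = ((1 - R₀ / R) * (2 * R)) ^ d := (mul_pow _ _ _).symm
      _ = (2 * (R - R₀)) ^ d := by
          congr 1
          field_simp
  -- energy bounds
  have h1 : (1 - η) * (2 * (R - R₀)) ^ d ≤ cubeEnergy d aminus R := by
    refine le_trans ?_ (energy_lower ham_int ham_nonneg ham_meas hR₀0.le hR₀R)
    exact mul_le_mul_of_nonneg_right hI hQ0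
  have h2 : cubeEnergy d aminus R ≤ (2 * R) ^ d := by
    have := energy_upper ham_int ham_nonneg ham_meas (d := d) hR0.le
    rw [ham_norm, one_mul] at this
    exact this
  have h3 : z * cubeEnergy d aminus R ≤ cubeEnergy d aplus R :=
    energy_z_le ham_int ham_nonneg ham_meas hap_int hap_nonneg hap_meas hz.le hza hR0.le
  have h4 := hacc t ht0 R hR0
  rw [hκmCt] at h4
  clear_value δ R
  have hCt0 : 0 < C * t := mul_pos hC ht0
  have hP0 : (0:ℝ) < (2 * R) ^ d := by positivity
  have hbCt : b / (C * t) ≤ ε / 4 * (2 * R) ^ d := by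
    have h2R : 2 * R ≤ (2 * R) ^ d := le_self_pow₀ (by linarith) (by omega)
    have h4b : 4 * b ≤ R * (C * t * ε) := by
      have := (div_le_iff₀ (by positivity : (0:ℝ) < C * t * ε)).mp hRge2
      linarith
    rw [div_le_iff₀ hCt0]
    nlinarith [mul_le_mul_of_nonneg_left h2R (by positivity : (0:ℝ) ≤ ε / 4 * (C * t))]
  have h5 : (b / (C * t)) * (1 - Real.exp (-(C * t * (2 * R) ^ d))) ≤ ε / 4 * (2 * R) ^ d := by
    have hbnn : 0 ≤ b / (C * t) := by positivity
    calc (b / (C * t)) * (1 - Real.exp (-(C * t * (2 * R) ^ d)))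
        ≤ (b / (C * t)) * 1 :=
          mul_le_mul_of_nonneg_left (by linarith [Real.exp_pos (-(C * t * (2 * R) ^ d))]) hbnn
      _ = b / (C * t) := mul_one _
      _ ≤ ε / 4 * (2 * R) ^ d := hbCt
  -- main chain
  have c1 : K * ((1 - η) * (2 * (R - R₀)) ^ d) ≤ κp * cubeEnergy d aplus R := by
    calc K * ((1 - η) * (2 * (R - R₀)) ^ d) ≤ K * cubeEnergy d aminus R :=
          mul_le_mul_of_nonneg_left h1 hK0.le
      _ = κp * (z * cubeEnergy d aminus R) := by rw [hKdef]; ring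
      _ ≤ κp * cubeEnergy d aplus R := mul_le_mul_of_nonneg_left h3 hκp.le
  have c2 : κp * cubeEnergy d aplus R ≤ (m + ε / 2) * (2 * R) ^ d := by
    have hEm : ε / 4 * cubeEnergy d aminus R ≤ ε / 4 * (2 * R) ^ d :=
      mul_le_mul_of_nonneg_left h2 (by positivity)
    linarith [h4, h5, hEm]
  have hKη : (0:ℝ) ≤ K * (1 - η) := mul_nonneg hK0.le (by linarith)
  have hb1 : K - ε / 2 ≤ K * (1 - η) * (1 - δ) :=
    arith_hb1 hK0 hη0.le hδ0 hηK hδK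
  have c3 : (K - ε / 2) * (2 * R) ^ d ≤ K * ((1 - η) * (2 * (R - R₀)) ^ d) := by
    calc (K - ε / 2) * (2 * R) ^ d ≤ (K * (1 - η) * (1 - δ)) * (2 * R) ^ d :=
          mul_le_mul_of_nonneg_right hb1 hP0.le
      _ = (K * (1 - η)) * ((1 - δ) * (2 * R) ^ d) := by ring
      _ ≤ (K * (1 - η)) * ((2 * (R - R₀)) ^ d) := mul_le_mul_of_nonneg_left hber hKη
      _ = K * ((1 - η) * (2 * (R - R₀)) ^ d) := by ring
  have final : K - ε / 2 ≤ m + ε / 2 := by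
    have := (c3.trans (c1.trans c2))
    exact le_of_mul_le_mul_right (by linarith [this]) hP0
  linarith
end
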